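/- arXiv:math/0408150 — 9 statements merged into one kernel-verified Lean document; each statement's English description precedes it below -/
import Mathlib

section
/- Let M > 0, M' > M, and a ∈ ℝ. There exists a constant C > 0 such that for all x ∈ ℝ and all t > 0: ∫_{−∞}^0 t^{−1/2} e^{−(x−y−at)²/(Mt)} (1+|y|)^{−3/2} dy ≤ C ( min( t^{−1/2}, (1+|x−at|)^{−3/2} ) + (1+t)^{−1/2} e^{−(x−at)²/(M't)} ). -/
open MeasureTheory Set Real

lemma rpow_neg_anti {A B : ℝ} (hA : 0 < A) (hAB : A ≤ B) {e : ℝ} (he : 0 ≤ e) :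
    B ^ (-e) ≤ A ^ (-e) := by
  rw [Real.rpow_neg (hA.trans_le hAB).le, Real.rpow_neg hA.le]
  exact inv_anti₀ (Real.rpow_pos_of_pos hA e) (Real.rpow_le_rpow hA.le hAB he)


lemma shift_emb : MeasurableEmbedding (fun x : ℝ => x + 1) :=
  (Homeomorph.addRight (1:ℝ)).isClosedEmbedding.measurableEmbedding

lemma pre1 : (fun x : ℝ => x + 1) ⁻¹' (Ioi 1) = Ioi 0 := by
  ext x; simp [mem_Ioi]

lemma int_Ioi0 : IntegrableOn (fun u : ℝ => (1+u) ^ (-(3/2:ℝ))) (Ioi 0) := by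
  have h1 : IntegrableOn (fun u : ℝ => u ^ (-(3/2:ℝ))) (Ioi 1) :=
    integrableOn_Ioi_rpow_of_lt (by norm_num) one_pos
  rw [show (volume : Measure ℝ) = Measure.map (fun x : ℝ => x + 1) volume from
    (map_add_right_eq_self volume 1).symm,
    shift_emb.integrableOn_map_iff, pre1] at h1
  exact h1.congr_fun (fun x _ => by simp [Function.comp, add_comm]) measurableSet_Ioi

lemma val_Ioi0 : ∫ u in Ioi (0:ℝ), (1+u) ^ (-(3/2:ℝ)) = 2 := by
  have h1 : ∫ u in Ioi (1:ℝ), u ^ (-(3/2:ℝ)) = 2 := by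
    rw [integral_Ioi_rpow_of_lt (by norm_num) one_pos]; norm_num
  have := shift_emb.setIntegral_map (μ := volume) (fun u : ℝ => u ^ (-(3/2:ℝ))) (Ioi 1)
  rw [map_add_right_eq_self volume 1, pre1] at this
  have h2 : ∫ x in Ioi (0:ℝ), (x+1)^(-(3/2:ℝ)) = 2 := by rw [← this]; exact h1
  refine Eq.trans ?_ h2
  exact setIntegral_congr_fun measurableSet_Ioi fun x hx => by rw [add_comm 1 x]

lemma intP : IntegrableOn (fun y : ℝ => (1+|y|) ^ (-(3/2:ℝ))) (Iic 0) := by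
  have h0 : IntegrableOn (fun u : ℝ => (1+u) ^ (-(3/2:ℝ))) (Ici 0) :=
    (integrableOn_Ici_iff_integrableOn_Ioi).mpr int_Ioi0
  have hneg : MeasurableEmbedding (fun x : ℝ => -x) :=
    (Homeomorph.neg ℝ).isClosedEmbedding.measurableEmbedding
  have : IntegrableOn (fun y : ℝ => (1+(-y)) ^ (-(3/2:ℝ))) (Iic 0) := by
    rw [show (volume : Measure ℝ) = Measure.map (fun x : ℝ => -x) volume from
      (Measure.map_neg_eq_self volume).symm, hneg.integrableOn_map_iff] at h0
    simpa [Function.comp_def, neg_Ici] using h0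
  exact this.congr_fun (fun x hx => by rw [abs_of_nonpos hx]) measurableSet_Iic

lemma valP : ∫ y in Iic (0:ℝ), (1+|y|) ^ (-(3/2:ℝ)) = 2 := by
  have : ∫ y in Iic (0:ℝ), (1+|y|) ^ (-(3/2:ℝ)) = ∫ y in Iic (0:ℝ), (1+(-y)) ^ (-(3/2:ℝ)) :=
    setIntegral_congr_fun measurableSet_Iic fun x hx => by rw [abs_of_nonpos hx]
  rw [this, integral_comp_neg_Iic 0 (fun u : ℝ => (1+u) ^ (-(3/2:ℝ))), neg_zero]
  exact val_Ioi0

lemma gauss_int (b z : ℝ) (hb : 0 < b) :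
    Integrable (fun y : ℝ => Real.exp (-(b * (z - y)^2))) := by
  have h : Integrable (fun u : ℝ => Real.exp (-b * u^2)) := integrable_exp_neg_mul_sq hb
  have := h.comp_sub_right z
  refine this.congr (Filter.Eventually.of_forall fun y => ?_)
  simp only [Function.comp]
  ring_nf

lemma gauss_val (b z : ℝ) (hb : 0 < b) :
    ∫ y : ℝ, Real.exp (-(b * (z - y)^2)) = Real.sqrt (π / b) := by
  have h1 : ∫ y : ℝ, Real.exp (-(b * (z - y)^2)) = ∫ y : ℝ, Real.exp (-b * (y - z)^2) := by
    congr 1; funext y; ring_nf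
  rw [h1, integral_sub_right_eq_self (fun u : ℝ => Real.exp (-b * u^2)) z,
    integral_gaussian]

lemma rpow_3h (a : ℝ) (ha : 0 ≤ a) : a ^ ((3:ℝ)/2) = Real.sqrt (a^3) := by
  rw [show ((3:ℝ)/2) = ((3:ℕ):ℝ) * (1/2:ℝ) by norm_num, Real.rpow_mul ha,
    Real.rpow_natCast, Real.sqrt_eq_rpow]

lemma min_lb {z : ℝ} (hz : |z| ≤ 1) : (3:ℝ)⁻¹ ≤ (1+|z|) ^ (-(3/2:ℝ)) := by
  have h0 : (0:ℝ) < 1 + |z| := by positivity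
  rw [Real.rpow_neg h0.le, rpow_3h _ h0.le]
  have h9 : Real.sqrt ((1+|z|)^3) ≤ 3 := by
    have h2 : |z|^2 ≤ 1 := by nlinarith [abs_nonneg z]
    have h3 : |z|^3 ≤ 1 := by nlinarith [abs_nonneg z]
    have : ((1+|z|)^3 : ℝ) ≤ 9 := by nlinarith [abs_nonneg z]
    calc Real.sqrt ((1+|z|)^3) ≤ Real.sqrt 9 := Real.sqrt_le_sqrt this
    _ = 3 := by rw [show (9:ℝ) = 3^2 by norm_num, Real.sqrt_sq (by norm_num)]
  have hpos : 0 < Real.sqrt ((1+|z|)^3) := Real.sqrt_pos.2 (by positivity)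
  rw [inv_le_inv₀ (by norm_num) hpos]
  exact h9

lemma tge1 (t : ℝ) (ht1 : 1 ≤ t) : t ^ (-(1/2:ℝ)) ≤ (3/2) * (1+t) ^ (-(1/2:ℝ)) := by
  have ht : (0:ℝ) < t := by linarith
  have h1t : (0:ℝ) < 1 + t := by linarith
  have hu : t ^ ((1:ℝ)/2) = Real.sqrt t := (Real.sqrt_eq_rpow t).symm
  have hv : (1+t) ^ ((1:ℝ)/2) = Real.sqrt (1+t) := (Real.sqrt_eq_rpow (1+t)).symm
  rw [Real.rpow_neg ht.le, Real.rpow_neg h1t.le, hu, hv]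
  have hsp : 0 < Real.sqrt t := Real.sqrt_pos.2 ht
  have h1p : 0 < Real.sqrt (1+t) := Real.sqrt_pos.2 h1t
  have key : 2 * Real.sqrt (1+t) ≤ 3 * Real.sqrt t := by
    nlinarith [Real.sq_sqrt ht.le, Real.sq_sqrt h1t.le, Real.sqrt_nonneg t,
      Real.sqrt_nonneg (1+t), sq_nonneg (3*Real.sqrt t - 2*Real.sqrt (1+t))]
  rw [inv_eq_one_div, inv_eq_one_div, ← mul_div_assoc, mul_one, div_le_div_iff₀ hsp h1p]
  linarith

lemma exp_neg_le_rpow (s : ℝ) (hs : 0 < s) : Real.exp (-s) ≤ s ^ (-(3/4:ℝ)) := by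
  rw [Real.exp_neg, Real.rpow_neg hs.le]
  refine inv_anti₀ (Real.rpow_pos_of_pos hs _) ?_
  rcases le_total s 1 with h | h
  · calc s ^ ((3:ℝ)/4) ≤ 1 := Real.rpow_le_one hs.le h (by norm_num)
    _ ≤ Real.exp s := by linarith [Real.add_one_le_exp s]
  · calc s ^ ((3:ℝ)/4) ≤ s ^ (1:ℝ) := Real.rpow_le_rpow_of_exponent_le h (by norm_num)
    _ = s := Real.rpow_one s
    _ ≤ Real.exp s := by linarith [Real.add_one_le_exp s]

lemma base_cmp {z : ℝ} (hz : 1 ≤ |z|) :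
    (|z| ^ ((3:ℝ)/2))⁻¹ ≤ 3 * (1+|z|) ^ (-(3/2:ℝ)) := by
  have h0 : (0:ℝ) < 1 + |z| := by positivity
  have hza : (0:ℝ) < |z| := by linarith
  rw [Real.rpow_neg h0.le, rpow_3h _ h0.le, rpow_3h _ hza.le]
  have hb : 0 < Real.sqrt (|z|^3) := Real.sqrt_pos.2 (by positivity)
  have ha : 0 < Real.sqrt ((1+|z|)^3) := Real.sqrt_pos.2 (by positivity)
  have key : Real.sqrt ((1+|z|)^3) ≤ 3 * Real.sqrt (|z|^3) := by
    have hcube : ((1+|z|)^3:ℝ) ≤ 9 * |z|^3 := by nlinarith [hz, hza.le, sq_nonneg (|z|-1)]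
    nlinarith [Real.sq_sqrt (by positivity : (0:ℝ) ≤ (1+|z|)^3),
      Real.sq_sqrt (by positivity : (0:ℝ) ≤ |z|^3), ha.le, hb.le,
      sq_nonneg (3 * Real.sqrt (|z|^3) - Real.sqrt ((1+|z|)^3))]
  rw [inv_eq_one_div, inv_eq_one_div, ← mul_div_assoc, mul_one, div_le_div_iff₀ hb ha]
  linarith

lemma far_small (M M' t z : ℝ) (hM : 0 < M) (hM' : M < M') (ht : 0 < t) (ht1 : t ≤ 1)
    (hz : 1 ≤ |z|) :
    t ^ (-(1/2:ℝ)) * Real.exp (-((M/M')*z^2) / (M*t)) ≤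
      3 * M' ^ ((3:ℝ)/4) * (1+|z|) ^ (-(3/2:ℝ)) := by
  have hM'0 : 0 < M' := hM.trans hM'
  have hzne : z ≠ 0 := by
    intro h; rw [h, abs_zero] at hz; linarith
  have hz2 : 0 < z^2 := by positivity
  have hs_eq : -((M/M')*z^2) / (M*t) = -(z^2 / (M'*t)) := by
    field_simp
  rw [hs_eq]
  set s := z^2/(M'*t) with hs
  have hspos : 0 < s := by positivity
  have h1 : Real.exp (-s) ≤ s ^ (-(3/4:ℝ)) := exp_neg_le_rpow s hspos
  have h2 : s ^ (-(3/4:ℝ)) = (M'*t/z^2) ^ ((3:ℝ)/4) := by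
    rw [Real.rpow_neg hspos.le, ← Real.inv_rpow hspos.le, hs, inv_div]
  have hz32 : (z^2) ^ ((3:ℝ)/4) = |z| ^ ((3:ℝ)/2) := by
    rw [← sq_abs z, ← Real.rpow_natCast |z| 2, ← Real.rpow_mul (abs_nonneg z)]
    norm_num
  have htp : 0 ≤ t ^ (-(1/2:ℝ)) := (Real.rpow_pos_of_pos ht _).le
  calc t ^ (-(1/2:ℝ)) * Real.exp (-s)
      ≤ t ^ (-(1/2:ℝ)) * s ^ (-(3/4:ℝ)) := mul_le_mul_of_nonneg_left h1 htp
    _ = t ^ (-(1/2:ℝ)) * ((M'*t) ^ ((3:ℝ)/4) * (|z| ^ ((3:ℝ)/2))⁻¹) := by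
        rw [h2, Real.div_rpow (by positivity) (by positivity), hz32]; ring
    _ = M'^((3:ℝ)/4) * (t^(-(1/2:ℝ)) * t^((3:ℝ)/4)) * (|z|^((3:ℝ)/2))⁻¹ := by
        rw [Real.mul_rpow hM'0.le ht.le]; ring
    _ = M'^((3:ℝ)/4) * t^((1:ℝ)/4) * (|z|^((3:ℝ)/2))⁻¹ := by
        rw [← Real.rpow_add ht]; norm_num
    _ ≤ M'^((3:ℝ)/4) * 1 * (3 * (1+|z|)^(-(3/2:ℝ))) := by
        have e1 : t^((1:ℝ)/4) ≤ 1 := Real.rpow_le_one ht.le ht1 (by norm_num)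
        have e2 := base_cmp hz
        have p1 : (0:ℝ) ≤ M'^((3:ℝ)/4) := (Real.rpow_pos_of_pos hM'0 _).le
        have p2 : (0:ℝ) ≤ t^((1:ℝ)/4) := (Real.rpow_pos_of_pos ht _).le
        have p3 : (0:ℝ) ≤ (|z|^((3:ℝ)/2))⁻¹ := by positivity
        nlinarith [mul_le_mul (mul_le_mul_of_nonneg_left e1 p1) e2 p3 (by positivity)]
    _ = 3 * M'^((3:ℝ)/4) * (1+|z|)^(-(3/2:ℝ)) := by ring


section Core
variable (M M' t z : ℝ)

lemma G_eq : (fun y : ℝ => Real.exp (-(z - y)^2 / (M*t)))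
    = fun y : ℝ => Real.exp (-((M*t)⁻¹ * (z-y)^2)) := by
  funext y; congr 1; ring

lemma G_int (hM : 0 < M) (ht : 0 < t) :
    Integrable (fun y : ℝ => Real.exp (-(z - y)^2 / (M*t))) := by
  have hMt : 0 < M*t := mul_pos hM ht
  rw [G_eq]
  exact gauss_int (M*t)⁻¹ z (inv_pos.2 hMt)

lemma G_val (hM : 0 < M) (ht : 0 < t) :
    ∫ y in Iic (0:ℝ), Real.exp (-(z - y)^2 / (M*t)) ≤ Real.sqrt (π*M) * Real.sqrt t := by
  have hMt : 0 < M*t := mul_pos hM ht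
  have h1 : ∫ y in Iic (0:ℝ), Real.exp (-(z - y)^2 / (M*t))
      ≤ ∫ y, Real.exp (-(z - y)^2 / (M*t)) :=
    setIntegral_le_integral (G_int M t z hM ht)
      (Filter.Eventually.of_forall fun y => (Real.exp_pos _).le)
  have h2 : ∫ y, Real.exp (-(z - y)^2 / (M*t)) = Real.sqrt (π / (M*t)⁻¹) := by
    rw [G_eq]
    exact gauss_val (M*t)⁻¹ z (inv_pos.2 hMt)
  rw [h2, show π / (M*t)⁻¹ = π*M*t by field_simp,
    Real.sqrt_mul (by positivity)] at h1
  exact h1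

lemma f_cont (hM : 0 < M) (ht : 0 < t) :
    Continuous (fun y : ℝ => t ^ (-(1/2:ℝ)) * Real.exp (-(z - y)^2 / (M*t)) *
      (1 + |y|) ^ (-(3/2:ℝ))) := by
  have h1 : Continuous fun y : ℝ => Real.exp (-(z - y)^2 / (M*t)) := by fun_prop
  have h3 : Continuous fun y : ℝ => 1 + |y| := by continuity
  have h2 : Continuous fun y : ℝ => (1+|y|) ^ (-(3/2:ℝ)) :=
    h3.rpow_const fun y => Or.inl (by positivity)
  exact (continuous_const.mul h1).mul h2

lemma f_le (hM : 0 < M) (ht : 0 < t) (y : ℝ) :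
    t ^ (-(1/2:ℝ)) * Real.exp (-(z - y)^2 / (M*t)) * (1 + |y|) ^ (-(3/2:ℝ))
      ≤ t ^ (-(1/2:ℝ)) * (1 + |y|) ^ (-(3/2:ℝ)) := by
  have htinv : (0:ℝ) ≤ t ^ (-(1/2:ℝ)) := (Real.rpow_pos_of_pos ht _).le
  have hMt : 0 < M*t := mul_pos hM ht
  have hG1 : Real.exp (-(z - y)^2 / (M*t)) ≤ 1 := Real.exp_le_one_iff.2
    (div_nonpos_of_nonpos_of_nonneg (neg_nonpos.2 (sq_nonneg _)) hMt.le)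
  have hPnn : (0:ℝ) ≤ (1+|y|) ^ (-(3/2:ℝ)) := (Real.rpow_pos_of_pos (by positivity) _).le
  calc t ^ (-(1/2:ℝ)) * Real.exp (-(z - y)^2 / (M*t)) * (1 + |y|) ^ (-(3/2:ℝ))
      ≤ t ^ (-(1/2:ℝ)) * 1 * (1 + |y|) ^ (-(3/2:ℝ)) :=
        mul_le_mul_of_nonneg_right (mul_le_mul_of_nonneg_left hG1 htinv) hPnn
    _ = t ^ (-(1/2:ℝ)) * (1 + |y|) ^ (-(3/2:ℝ)) := by ring

lemma f_nonneg (ht : 0 < t) (y : ℝ) :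
    0 ≤ t ^ (-(1/2:ℝ)) * Real.exp (-(z - y)^2 / (M*t)) * (1 + |y|) ^ (-(3/2:ℝ)) :=
  mul_nonneg (mul_nonneg (Real.rpow_pos_of_pos ht _).le (Real.exp_pos _).le)
    (Real.rpow_pos_of_pos (by positivity) _).le

lemma f_int (hM : 0 < M) (ht : 0 < t) :
    IntegrableOn (fun y : ℝ => t ^ (-(1/2:ℝ)) * Real.exp (-(z - y)^2 / (M*t)) *
      (1 + |y|) ^ (-(3/2:ℝ))) (Iic 0) := by
  refine Integrable.mono' (intP.const_mul (t ^ (-(1/2:ℝ))))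
    (f_cont M t z hM ht).aestronglyMeasurable.restrict ?_
  exact Filter.Eventually.of_forall fun y => by
    rw [Real.norm_of_nonneg (f_nonneg M t z ht y)]; exact f_le M t z hM ht y

lemma B1lem (hM : 0 < M) (ht : 0 < t) :
    (∫ y in Iic (0:ℝ), t ^ (-(1/2:ℝ)) * Real.exp (-(z - y)^2 / (M*t)) *
      (1 + |y|) ^ (-(3/2:ℝ))) ≤ 2 * t ^ (-(1/2:ℝ)) := by
  have h := setIntegral_mono_on (f_int M t z hM ht) (intP.const_mul (t ^ (-(1/2:ℝ))))
    measurableSet_Iic (fun y _ => f_le M t z hM ht y)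
  rw [integral_const_mul, valP] at h
  linarith

lemma B2lem (hM : 0 < M) (ht : 0 < t) :
    (∫ y in Iic (0:ℝ), t ^ (-(1/2:ℝ)) * Real.exp (-(z - y)^2 / (M*t)) *
      (1 + |y|) ^ (-(3/2:ℝ))) ≤ Real.sqrt (π*M) := by
  have htinv : (0:ℝ) < t ^ (-(1/2:ℝ)) := Real.rpow_pos_of_pos ht _
  have hG2 : IntegrableOn (fun y : ℝ => t ^ (-(1/2:ℝ)) * Real.exp (-(z - y)^2 / (M*t)))
      (Iic 0) := (G_int M t z hM ht).integrableOn.const_mul _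
  have h := setIntegral_mono_on (f_int M t z hM ht) hG2 measurableSet_Iic (fun y _ => by
    have hPle1 : (1+|y|) ^ (-(3/2:ℝ)) ≤ 1 :=
      Real.rpow_le_one_of_one_le_of_nonpos (by linarith [abs_nonneg y]) (by norm_num)
    exact mul_le_of_le_one_right
      (mul_nonneg (Real.rpow_pos_of_pos ht _).le (Real.exp_pos _).le) hPle1)
  rw [integral_const_mul] at h
  have h2 := mul_le_mul_of_nonneg_left (G_val M t z hM ht) htinv.le
  have hts : t ^ (-(1/2:ℝ)) * Real.sqrt t = 1 := by
    rw [Real.sqrt_eq_rpow, ← Real.rpow_add ht]; norm_num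
  have h3 : t ^ (-(1/2:ℝ)) * (Real.sqrt (π*M) * Real.sqrt t) = Real.sqrt (π*M) := by
    rw [show t ^ (-(1/2:ℝ)) * (Real.sqrt (π*M) * Real.sqrt t)
      = Real.sqrt (π*M) * (t ^ (-(1/2:ℝ)) * Real.sqrt t) by ring, hts, mul_one]
  linarith

lemma B3lem (hM : 0 < M) (hM' : M < M') (ht : 0 < t) :
    (∫ y in Iic (0:ℝ), t ^ (-(1/2:ℝ)) * Real.exp (-(z - y)^2 / (M*t)) *
        (1 + |y|) ^ (-(3/2:ℝ))) ≤
      Real.sqrt (π*M) * (1 - Real.sqrt (M/M')) ^ (-(3/2:ℝ)) * (1+|z|) ^ (-(3/2:ℝ)) +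
        2 * (t ^ (-(1/2:ℝ)) * Real.exp (-((M/M')*z^2) / (M*t))) := by
  have hM'0 : 0 < M' := hM.trans hM'
  have hμ0 : 0 < M/M' := div_pos hM hM'0
  have hμ1 : M/M' < 1 := (div_lt_one hM'0).2 hM'
  have hr1 : Real.sqrt (M/M') < 1 := by
    nlinarith [Real.sq_sqrt hμ0.le, Real.sqrt_nonneg (M/M')]
  have hrpos : 0 < 1 - Real.sqrt (M/M') := by linarith
  have hKpos : 0 < (1 - Real.sqrt (M/M')) ^ (-(3/2:ℝ)) := Real.rpow_pos_of_pos hrpos _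
  have hMt : 0 < M*t := mul_pos hM ht
  have htinv : (0:ℝ) < t ^ (-(1/2:ℝ)) := Real.rpow_pos_of_pos ht _
  have hPznn : (0:ℝ) ≤ (1+|z|) ^ (-(3/2:ℝ)) := (Real.rpow_pos_of_pos (by positivity) _).le
  have hQnn : (0:ℝ) ≤ Real.exp (-((M/M')*z^2) / (M*t)) := (Real.exp_pos _).le
  have hsplit : ∀ y ∈ Iic (0:ℝ),
      t ^ (-(1/2:ℝ)) * Real.exp (-(z - y)^2 / (M*t)) * (1 + |y|) ^ (-(3/2:ℝ)) ≤
      ((1 - Real.sqrt (M/M')) ^ (-(3/2:ℝ)) * (1+|z|) ^ (-(3/2:ℝ))) *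
          (t ^ (-(1/2:ℝ)) * Real.exp (-(z - y)^2 / (M*t))) +
        (t ^ (-(1/2:ℝ)) * Real.exp (-((M/M')*z^2) / (M*t))) * (1 + |y|) ^ (-(3/2:ℝ)) := by
    intro y _
    have hGnn : (0:ℝ) ≤ Real.exp (-(z - y)^2 / (M*t)) := (Real.exp_pos _).le
    have hPnn : (0:ℝ) ≤ (1+|y|) ^ (-(3/2:ℝ)) := (Real.rpow_pos_of_pos (by positivity) _).le
    rcases le_or_gt ((M/M')*z^2) ((z-y)^2) with hcase | hcase
    · have hGle : Real.exp (-(z - y)^2 / (M*t)) ≤ Real.exp (-((M/M')*z^2) / (M*t)) := by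
        apply Real.exp_le_exp.2
        apply div_le_div_of_nonneg_right (neg_le_neg hcase) hMt.le
      have h1 : t ^ (-(1/2:ℝ)) * Real.exp (-(z - y)^2 / (M*t)) * (1 + |y|) ^ (-(3/2:ℝ))
          ≤ (t ^ (-(1/2:ℝ)) * Real.exp (-((M/M')*z^2) / (M*t))) * (1 + |y|) ^ (-(3/2:ℝ)) :=
        mul_le_mul_of_nonneg_right (mul_le_mul_of_nonneg_left hGle htinv.le) hPnn
      have h2 : 0 ≤ ((1 - Real.sqrt (M/M')) ^ (-(3/2:ℝ)) * (1+|z|) ^ (-(3/2:ℝ))) *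
          (t ^ (-(1/2:ℝ)) * Real.exp (-(z - y)^2 / (M*t))) :=
        mul_nonneg (mul_nonneg hKpos.le hPznn) (mul_nonneg htinv.le hGnn)
      linarith
    · have habs : |z - y| < Real.sqrt (M/M') * |z| := by
        have h1 : Real.sqrt ((z-y)^2) < Real.sqrt ((M/M')*z^2) :=
          Real.sqrt_lt_sqrt (sq_nonneg _) hcase
        rwa [Real.sqrt_sq_eq_abs, Real.sqrt_mul hμ0.le, Real.sqrt_sq_eq_abs] at h1
      have h1y : (1 - Real.sqrt (M/M')) * (1+|z|) ≤ 1 + |y| := by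
        have t1 : |z| - |y| ≤ |z - y| := abs_sub_abs_le_abs_sub z y
        have t2 : 0 ≤ Real.sqrt (M/M') := Real.sqrt_nonneg _
        nlinarith [abs_nonneg z, abs_nonneg y]
      have hPz : (1+|y|) ^ (-(3/2:ℝ)) ≤
          (1 - Real.sqrt (M/M')) ^ (-(3/2:ℝ)) * (1+|z|) ^ (-(3/2:ℝ)) := by
        rw [← Real.mul_rpow hrpos.le (by positivity)]
        exact rpow_neg_anti (by positivity) h1y (by norm_num)
      have h1 : t ^ (-(1/2:ℝ)) * Real.exp (-(z - y)^2 / (M*t)) * (1 + |y|) ^ (-(3/2:ℝ))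
          ≤ (t ^ (-(1/2:ℝ)) * Real.exp (-(z - y)^2 / (M*t))) *
            ((1 - Real.sqrt (M/M')) ^ (-(3/2:ℝ)) * (1+|z|) ^ (-(3/2:ℝ))) :=
        mul_le_mul_of_nonneg_left hPz (mul_nonneg htinv.le hGnn)
      have h2 : 0 ≤ (t ^ (-(1/2:ℝ)) * Real.exp (-((M/M')*z^2) / (M*t))) *
          (1 + |y|) ^ (-(3/2:ℝ)) :=
        mul_nonneg (mul_nonneg htinv.le hQnn) hPnn
      nlinarith [h1, h2]
  have hint_g : IntegrableOn (fun y : ℝ =>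
      ((1 - Real.sqrt (M/M')) ^ (-(3/2:ℝ)) * (1+|z|) ^ (-(3/2:ℝ))) *
        (t ^ (-(1/2:ℝ)) * Real.exp (-(z - y)^2 / (M*t)))) (Iic 0) :=
    ((G_int M t z hM ht).integrableOn.const_mul _).const_mul _
  have hint_h : IntegrableOn (fun y : ℝ =>
      (t ^ (-(1/2:ℝ)) * Real.exp (-((M/M')*z^2) / (M*t))) * (1 + |y|) ^ (-(3/2:ℝ)))
      (Iic 0) := intP.const_mul _
  have h := setIntegral_mono_on (f_int M t z hM ht) (hint_g.add hint_h)
    measurableSet_Iic hsplit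
  simp only [Pi.add_apply] at h
  rw [integral_add hint_g hint_h, integral_const_mul, integral_const_mul,
    integral_const_mul, valP] at h
  have h2 : ((1 - Real.sqrt (M/M')) ^ (-(3/2:ℝ)) * (1+|z|) ^ (-(3/2:ℝ))) *
      (t ^ (-(1/2:ℝ)) * ∫ y in Iic (0:ℝ), Real.exp (-(z - y)^2 / (M*t)))
      ≤ Real.sqrt (π*M) * (1 - Real.sqrt (M/M')) ^ (-(3/2:ℝ)) * (1+|z|) ^ (-(3/2:ℝ)) := by
    have h4 := mul_le_mul_of_nonneg_left (G_val M t z hM ht) htinv.le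
    have hts : t ^ (-(1/2:ℝ)) * Real.sqrt t = 1 := by
      rw [Real.sqrt_eq_rpow, ← Real.rpow_add ht]; norm_num
    have h5 : t ^ (-(1/2:ℝ)) * (Real.sqrt (π*M) * Real.sqrt t) = Real.sqrt (π*M) := by
      rw [show t ^ (-(1/2:ℝ)) * (Real.sqrt (π*M) * Real.sqrt t)
        = Real.sqrt (π*M) * (t ^ (-(1/2:ℝ)) * Real.sqrt t) by ring, hts, mul_one]
    rw [h5] at h4
    calc ((1 - Real.sqrt (M/M')) ^ (-(3/2:ℝ)) * (1+|z|) ^ (-(3/2:ℝ))) *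
        (t ^ (-(1/2:ℝ)) * ∫ y in Iic (0:ℝ), Real.exp (-(z - y)^2 / (M*t)))
        ≤ ((1 - Real.sqrt (M/M')) ^ (-(3/2:ℝ)) * (1+|z|) ^ (-(3/2:ℝ))) * Real.sqrt (π*M) :=
          mul_le_mul_of_nonneg_left h4 (mul_nonneg hKpos.le hPznn)
      _ = Real.sqrt (π*M) * (1 - Real.sqrt (M/M')) ^ (-(3/2:ℝ)) * (1+|z|) ^ (-(3/2:ℝ)) := by
          ring
  linarith

end Core

lemma A1 (E ti g C : ℝ) (I1 : E ≤ 2*ti) (h2 : 2 ≤ C) (hti : 0 ≤ ti) (hg : 0 ≤ g)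
    (hC : 0 ≤ C) : E ≤ C*(ti + g) := by nlinarith

lemma A2 (E sM pz g C : ℝ) (I2 : E ≤ sM) (key : sM ≤ C*pz) (hg : 0 ≤ g) (hC : 0 ≤ C) :
    E ≤ C*(pz + g) := by nlinarith

lemma A3 (E sMK Mp pz g C ti gq : ℝ) (I3 : E ≤ sMK*pz + 2*(ti*gq))
    (hfar : ti*gq ≤ 3*Mp*pz) (hsum : sMK + 6*Mp ≤ C) (hpz : 0 ≤ pz) (hg : 0 ≤ g)
    (hC : 0 ≤ C) : E ≤ C*(pz + g) := by nlinarith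

lemma A4 (E sMK pz gt gq C ti : ℝ) (I3 : E ≤ sMK*pz + 2*(ti*gq))
    (e1 : 2*ti ≤ 3*gt) (h1 : sMK ≤ C) (h3 : 3 ≤ C) (hpz : 0 ≤ pz) (hgq : 0 ≤ gq)
    (hgt : 0 ≤ gt) : E ≤ C*(pz + gt*gq) := by
  nlinarith [mul_le_mul_of_nonneg_right e1 hgq, mul_le_mul_of_nonneg_right h1 hpz,
    mul_le_mul_of_nonneg_right h3 (mul_nonneg hgt hgq)]

theorem convection_estimate (M M' a : ℝ) (hM : 0 < M) (hM' : M < M') :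
    ∃ C > 0, ∀ (x t : ℝ), 0 < t →
      (∫ y in Set.Iic (0:ℝ),
          t ^ (-(1/2 : ℝ)) * Real.exp (-(x - y - a*t)^2 / (M*t)) *
            (1 + |y|) ^ (-(3/2 : ℝ))) ≤
        C * (min (t ^ (-(1/2 : ℝ))) ((1 + |x - a*t|) ^ (-(3/2 : ℝ))) +
          (1 + t) ^ (-(1/2 : ℝ)) * Real.exp (-(x - a*t)^2 / (M'*t))) := by
  have hM'0 : 0 < M' := hM.trans hM'
  have hμ0 : 0 < M/M' := div_pos hM hM'0
  have hμ1 : M/M' < 1 := (div_lt_one hM'0).2 hM'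
  have hr1 : Real.sqrt (M/M') < 1 := by
    nlinarith [Real.sq_sqrt hμ0.le, Real.sqrt_nonneg (M/M')]
  have hrpos : 0 < 1 - Real.sqrt (M/M') := by linarith
  obtain ⟨K, hKdef⟩ : ∃ K : ℝ, K = (1 - Real.sqrt (M/M')) ^ (-(3/2:ℝ)) := ⟨_, rfl⟩
  have hKpos : 0 < K := hKdef ▸ Real.rpow_pos_of_pos hrpos _
  have hsM : (0:ℝ) ≤ Real.sqrt (π*M) := Real.sqrt_nonneg _
  have hMp : (0:ℝ) < M' ^ ((3:ℝ)/4) := Real.rpow_pos_of_pos hM'0 _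
  have hsMK : (0:ℝ) ≤ Real.sqrt (π*M) * K := mul_nonneg hsM hKpos.le
  obtain ⟨C, hCdef⟩ : ∃ C : ℝ,
      C = 5 + 3*Real.sqrt (π*M) + Real.sqrt (π*M) * K + 6 * M' ^ ((3:ℝ)/4) := ⟨_, rfl⟩
  have hCpos : 0 < C := by rw [hCdef]; positivity
  refine ⟨C, hCpos, fun x t ht => ?_⟩
  obtain ⟨z, hzdef⟩ : ∃ z : ℝ, z = x - a*t := ⟨_, rfl⟩
  have hEq : (∫ y in Iic (0:ℝ), t ^ (-(1/2:ℝ)) * Real.exp (-(x - y - a*t)^2 / (M*t)) *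
        (1 + |y|) ^ (-(3/2:ℝ)))
      = ∫ y in Iic (0:ℝ), t ^ (-(1/2:ℝ)) * Real.exp (-(z - y)^2 / (M*t)) *
        (1 + |y|) ^ (-(3/2:ℝ)) := by
    refine setIntegral_congr_fun measurableSet_Iic fun y _ => ?_
    rw [show x - y - a*t = z - y by rw [hzdef]; ring]
  rw [hEq, ← hzdef]
  have I1 := B1lem M t z hM ht
  have I2 := B2lem M t z hM ht
  have I3 := B3lem M M' t z hM hM' ht
  rw [← hKdef] at I3
  have hQ' : Real.exp (-((M/M')*z^2) / (M*t)) = Real.exp (-z^2 / (M'*t)) := by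
    have h1 : M ≠ 0 := hM.ne'
    have h2 : M' ≠ 0 := hM'0.ne'
    have h3 : t ≠ 0 := ht.ne'
    congr 1; field_simp
  rw [hQ'] at I3
  have htinv : (0:ℝ) < t ^ (-(1/2:ℝ)) := Real.rpow_pos_of_pos ht _
  have hPznn : (0:ℝ) ≤ (1+|z|) ^ (-(3/2:ℝ)) := (Real.rpow_pos_of_pos (by positivity) _).le
  have hQnn : (0:ℝ) ≤ Real.exp (-z^2 / (M'*t)) := (Real.exp_pos _).le
  have hgt_nn : 0 ≤ (1+t) ^ (-(1/2:ℝ)) * Real.exp (-z^2 / (M'*t)) :=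
    mul_nonneg (Real.rpow_pos_of_pos (by linarith) _).le hQnn
  rcases le_total (t ^ (-(1/2:ℝ))) ((1+|z|) ^ (-(3/2:ℝ))) with hmin | hmin
  · rw [min_eq_left hmin]
    have hC2 : (2:ℝ) ≤ C := by rw [hCdef]; linarith [hMp.le]
    exact A1 _ _ _ _ I1 hC2 htinv.le hgt_nn hCpos.le
  · rw [min_eq_right hmin]
    rcases le_total t 1 with ht1 | ht1
    · rcases le_total |z| 1 with hz1 | hz1
      · have hlb := min_lb hz1
        have hC3 : 3 * Real.sqrt (π*M) ≤ C := by rw [hCdef]; linarith [hMp.le]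
        have key : Real.sqrt (π*M) ≤ C * (1+|z|) ^ (-(3/2:ℝ)) := by
          have h6 := mul_le_mul hC3 hlb (by norm_num) hCpos.le
          calc Real.sqrt (π*M) = 3 * Real.sqrt (π*M) * 3⁻¹ := by ring
            _ ≤ C * (1+|z|) ^ (-(3/2:ℝ)) := h6
        exact A2 _ _ _ _ _ I2 key hgt_nn hCpos.le
      · have hfar := far_small M M' t z hM hM' ht ht1 hz1
        rw [hQ'] at hfar
        have hsum : Real.sqrt (π*M) * K + 6 * M' ^ ((3:ℝ)/4) ≤ C := by
          rw [hCdef]; linarith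
        have hfar' : t ^ (-(1/2:ℝ)) * Real.exp (-z^2 / (M'*t)) ≤
            3 * M' ^ ((3:ℝ)/4) * (1+|z|) ^ (-(3/2:ℝ)) := hfar
        exact A3 _ _ _ _ _ _ _ _ I3 (by linarith [hfar']) hsum hPznn hgt_nn hCpos.le
    · have htge := tge1 t ht1
      have hsum1 : Real.sqrt (π*M) * K ≤ C := by rw [hCdef]; linarith [hMp.le]
      have hC3 : (3:ℝ) ≤ C := by rw [hCdef]; linarith [hMp.le]
      have hgtp : (0:ℝ) ≤ (1+t) ^ (-(1/2:ℝ)) := (Real.rpow_pos_of_pos (by linarith) _).le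
      exact A4 _ _ _ _ _ _ _ I3 (by linarith [htge]) hsum1 hC3 hPznn hQnn hgtp
end

section
/- Let M > 0, M' > M, r < 0, and b ∈ ℝ. There exists a constant C > 0 such that for all x ∈ ℝ and all t > 0: ∫_{−∞}^0 t^{−1/2} e^{−(x−ry−bt)²/(Mt)} (1+|y|)^{−3/2} dy ≤ C ( min( t^{−1/2}, (1+|x−bt|)^{−3/2} ) + (1+t)^{−1/2} e^{−(x−bt)²/(M't)} ). -/
open MeasureTheory Set Real

set_option maxHeartbeats 1000000

lemma weight_Ioi_integrable : IntegrableOn (fun y : ℝ => (1 + y) ^ (-(3/2):ℝ)) (Ioi (0:ℝ)) := by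
  have A : MeasurableEmbedding fun x : ℝ => x + 1 :=
    (Homeomorph.addRight (1:ℝ)).isClosedEmbedding.measurableEmbedding
  have h := integrableOn_Ioi_rpow_of_lt (a := -(3/2:ℝ)) (by norm_num) (c := 1) one_pos
  rw [← map_add_right_eq_self volume (1:ℝ)] at h
  have h2 := A.integrableOn_map_iff.mp h
  have hpre : (fun x : ℝ => x + 1) ⁻¹' (Ioi 1) = Ioi 0 := by ext x; simp
  rw [hpre] at h2
  exact h2.congr_fun (fun x _ => by simp [Function.comp, add_comm]) measurableSet_Ioi

lemma weight_Ioi_value : (∫ y in Ioi (0:ℝ), (1 + y) ^ (-(3/2):ℝ)) = 2 := by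
  have A : MeasurableEmbedding fun x : ℝ => x + 1 :=
    (Homeomorph.addRight (1:ℝ)).isClosedEmbedding.measurableEmbedding
  have h := A.setIntegral_map (μ := volume) (fun u : ℝ => u ^ (-(3/2):ℝ)) (Ioi 1)
  rw [map_add_right_eq_self volume (1:ℝ)] at h
  rw [integral_Ioi_rpow_of_lt (by norm_num) one_pos] at h
  have hpre : (fun x : ℝ => x + 1) ⁻¹' (Ioi 1) = Ioi 0 := by ext x; simp
  rw [hpre] at h
  have e : (∫ y in Ioi (0:ℝ), (1 + y) ^ (-(3/2):ℝ)) = ∫ x in Ioi (0:ℝ), (x + 1) ^ (-(3/2):ℝ) := by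
    refine setIntegral_congr_fun measurableSet_Ioi (fun x _ => ?_)
    rw [add_comm]
  rw [e, ← h]
  norm_num

lemma weight_Iic_integrable : IntegrableOn (fun y : ℝ => (1 + |y|) ^ (-(3/2):ℝ)) (Iic (0:ℝ)) := by
  have m : MeasurableEmbedding fun x : ℝ => -x := (Homeomorph.neg ℝ).measurableEmbedding
  rw [← Measure.map_neg_eq_self (volume : Measure ℝ)]
  rw [m.integrableOn_map_iff]
  have hpre : (fun x : ℝ => -x) ⁻¹' (Iic 0) = Ici 0 := by ext x; simp
  rw [hpre]
  have h2 : IntegrableOn (fun y : ℝ => (1 + |y|) ^ (-(3/2):ℝ)) (Ici (0:ℝ)) := by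
    rw [integrableOn_Ici_iff_integrableOn_Ioi]
    exact weight_Ioi_integrable.congr_fun
      (fun x hx => by rw [abs_of_pos (show (0:ℝ) < x from hx)]) measurableSet_Ioi
  exact h2.congr_fun (fun x _ => by simp [Function.comp, abs_neg]) measurableSet_Ici

lemma weight_Iic_value : (∫ y in Iic (0:ℝ), (1 + |y|) ^ (-(3/2):ℝ)) = 2 := by
  have h := integral_comp_neg_Iic (0:ℝ) (fun x : ℝ => (1 + |x|) ^ (-(3/2):ℝ))
  simp only [abs_neg, neg_zero] at h
  rw [h]
  rw [setIntegral_congr_fun measurableSet_Ioi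
    (fun x hx => by rw [abs_of_pos hx] : ∀ x ∈ Ioi (0:ℝ),
      (1 + |x|) ^ (-(3/2):ℝ) = (1 + x) ^ (-(3/2):ℝ))]
  exact weight_Ioi_value

lemma gaussian_integrable (c : ℝ) (hc : 0 < c) (a r : ℝ) (hr : r ≠ 0) :
    Integrable (fun y : ℝ => Real.exp (-c * (a - r*y)^2)) := by
  have h1 : Integrable (fun x : ℝ => Real.exp (-c * x^2)) := integrable_exp_neg_mul_sq hc
  have h2 : Integrable (fun x : ℝ => Real.exp (-c * (x - a)^2)) := h1.comp_sub_right a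
  have h3 := h2.comp_mul_left' hr
  exact h3.congr (Filter.Eventually.of_forall fun y => by ring_nf)

lemma gaussian_integral_eq (c : ℝ) (hc : 0 < c) (a r : ℝ) (hr : r ≠ 0) :
    (∫ y : ℝ, Real.exp (-c * (a - r*y)^2)) = |r|⁻¹ * Real.sqrt (π / c) := by
  have h0 : (fun y : ℝ => Real.exp (-c * (a - r*y)^2))
      = fun y : ℝ => (fun u : ℝ => Real.exp (-c * (a - u)^2)) (r * y) := rfl
  rw [h0, MeasureTheory.Measure.integral_comp_mul_left (fun u : ℝ => Real.exp (-c * (a - u)^2)) r]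
  have h1 : (fun u : ℝ => Real.exp (-c * (a - u)^2))
      = fun u : ℝ => (fun v : ℝ => Real.exp (-c * v^2)) (u - a) := by
    funext u; simp only; ring_nf
  rw [h1, integral_sub_right_eq_self (fun v : ℝ => Real.exp (-c * v^2)) a,
    integral_gaussian, smul_eq_mul, abs_inv]

lemma rpow_neg_half_eq (x : ℝ) (hx : 0 ≤ x) : x ^ (-(1/2):ℝ) = (Real.sqrt x)⁻¹ := by
  rw [Real.rpow_neg hx, Real.sqrt_eq_rpow]

lemma one_le_sqrt2_mul (t : ℝ) (ht : 0 ≤ t) (h1 : t ≤ 1) :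
    1 ≤ Real.sqrt 2 * (1+t) ^ (-(1/2):ℝ) := by
  rw [rpow_neg_half_eq _ (by linarith), ← div_eq_mul_inv,
    le_div_iff₀ (Real.sqrt_pos.mpr (by linarith)), one_mul]
  exact Real.sqrt_le_sqrt (by linarith)

lemma rpow_le_sqrt2_mul (t : ℝ) (h1 : 1 ≤ t) :
    t ^ (-(1/2):ℝ) ≤ Real.sqrt 2 * (1+t) ^ (-(1/2):ℝ) := by
  have ht : (0:ℝ) < t := by linarith
  rw [rpow_neg_half_eq _ ht.le, rpow_neg_half_eq _ (by linarith)]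
  rw [← div_eq_mul_inv, le_div_iff₀ (Real.sqrt_pos.mpr (by linarith)),
    inv_mul_le_iff₀ (Real.sqrt_pos.mpr ht), ← Real.sqrt_mul ht.le]
  exact Real.sqrt_le_sqrt (by nlinarith)

lemma sqrt_mul_exp_le (δ a : ℝ) (hδ : 0 < δ) (ha : 0 ≤ a) :
    Real.sqrt a * Real.exp (-(δ * a)) ≤ (Real.sqrt (2*δ))⁻¹ := by
  have h1 : 1 + 2*δ*a ≤ Real.exp (2*δ*a) := by
    have := Real.add_one_le_exp (2*δ*a); linarith
  have hpos : (0:ℝ) < 1 + 2*δ*a := by positivity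
  have hexp : Real.exp (-(2*δ*a)) ≤ (1 + 2*δ*a)⁻¹ := by
    rw [Real.exp_neg]
    exact inv_anti₀ hpos h1
  have hL : (Real.sqrt a * Real.exp (-(δ * a)))^2 ≤ (2*δ)⁻¹ := by
    have : (Real.sqrt a * Real.exp (-(δ * a)))^2 = a * Real.exp (-(2*δ*a)) := by
      rw [mul_pow, Real.sq_sqrt ha, pow_two, ← Real.exp_add,
        show -(δ*a) + -(δ*a) = -(2*δ*a) by ring]
    rw [this]
    calc a * Real.exp (-(2*δ*a)) ≤ a * (1 + 2*δ*a)⁻¹ := by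
          exact mul_le_mul_of_nonneg_left hexp ha
    _ ≤ (2*δ)⁻¹ := by
          rw [mul_inv_le_iff₀ hpos, inv_mul_eq_div, le_div_iff₀ (by positivity)]
          nlinarith
  have hnn : 0 ≤ Real.sqrt a * Real.exp (-(δ * a)) := by positivity
  calc Real.sqrt a * Real.exp (-(δ * a))
      = Real.sqrt ((Real.sqrt a * Real.exp (-(δ * a)))^2) := (Real.sqrt_sq hnn).symm
  _ ≤ Real.sqrt ((2*δ)⁻¹) := Real.sqrt_le_sqrt hL
  _ = (Real.sqrt (2*δ))⁻¹ := Real.sqrt_inv _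

lemma weight_shift_le (c z : ℝ) (hc : 0 < c) (hz : 0 ≤ z) :
    (1 + c*z) ^ (-(3/2):ℝ) ≤ (min 1 c) ^ (-(3/2):ℝ) * (1+z) ^ (-(3/2):ℝ) := by
  have hm : 0 < min 1 c := lt_min one_pos hc
  have hle : min 1 c * (1+z) ≤ 1 + c*z := by
    have h1 : min 1 c ≤ 1 := min_le_left _ _
    have h2 : min 1 c ≤ c := min_le_right _ _
    nlinarith
  calc (1 + c*z) ^ (-(3/2):ℝ) ≤ (min 1 c * (1+z)) ^ (-(3/2):ℝ) :=
        Real.rpow_le_rpow_of_nonpos (by positivity) hle (by norm_num)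
  _ = (min 1 c) ^ (-(3/2):ℝ) * (1+z) ^ (-(3/2):ℝ) :=
        Real.mul_rpow hm.le (by linarith)

lemma gaussian_integrable_div (N t a r : ℝ) (hN : 0 < N) (ht : 0 < t) (hr : r ≠ 0) :
    Integrable (fun y : ℝ => Real.exp (-(a - r*y)^2 / (N*t))) := by
  have hc : 0 < (N*t)⁻¹ := by positivity
  exact (gaussian_integrable ((N*t)⁻¹) hc a r hr).congr
    (Filter.Eventually.of_forall fun y => Real.exp_eq_exp.mpr (by ring))

lemma gaussian_integral_div (N t a r : ℝ) (hN : 0 < N) (ht : 0 < t) (hr : r ≠ 0) :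
    (∫ y : ℝ, Real.exp (-(a - r*y)^2 / (N*t))) = |r|⁻¹ * Real.sqrt (π * (N*t)) := by
  have hc : 0 < (N*t)⁻¹ := by positivity
  have e : (fun y : ℝ => Real.exp (-(a - r*y)^2 / (N*t)))
      = fun y : ℝ => Real.exp (-(N*t)⁻¹ * (a - r*y)^2) :=
    funext fun y => Real.exp_eq_exp.mpr (by ring)
  rw [e, gaussian_integral_eq ((N*t)⁻¹) hc a r hr, division_def, inv_inv]

lemma kernel_le_one (A B : ℝ) (hB : 0 < B) : Real.exp (-A^2 / B) ≤ 1 := by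
  rw [Real.exp_le_one_iff]
  exact div_nonpos_of_nonpos_of_nonneg (neg_nonpos.mpr (sq_nonneg _)) hB.le

lemma integrand_integrable (M t a r : ℝ) (ht : 0 < t) (hMt : 0 < M*t) :
    IntegrableOn (fun y : ℝ =>
      t ^ (-(1/2):ℝ) * Real.exp (-(a - r*y)^2 / (M*t)) * (1+|y|) ^ (-(3/2):ℝ)) (Iic 0) := by
  have hw := weight_Iic_integrable.const_mul (t ^ (-(1/2):ℝ))
  refine Integrable.mono' hw ?_ ?_
  · apply Continuous.aestronglyMeasurable
    have h1 : Continuous fun y : ℝ => Real.exp (-(a - r*y)^2 / (M*t)) := by fun_prop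
    have h2 : Continuous fun y : ℝ => (1+|y|) ^ (-(3/2):ℝ) :=
      (continuous_const.add continuous_abs).rpow_const (fun y => Or.inl (show (1:ℝ) + |y| ≠ 0 by positivity))
    exact (continuous_const.mul h1).mul h2
  · refine Filter.Eventually.of_forall fun y => ?_
    have ht2 : (0:ℝ) ≤ t ^ (-(1/2):ℝ) := by positivity
    have hw2 : (0:ℝ) ≤ (1+|y|) ^ (-(3/2):ℝ) := by positivity
    rw [Real.norm_eq_abs, abs_of_nonneg (by positivity)]
    calc t ^ (-(1/2):ℝ) * Real.exp (-(a - r*y)^2 / (M*t)) * (1+|y|) ^ (-(3/2):ℝ)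
        ≤ t ^ (-(1/2):ℝ) * 1 * (1+|y|) ^ (-(3/2):ℝ) := by
          have := kernel_le_one (a - r*y) (M*t) hMt
          gcongr
    _ = t ^ (-(1/2):ℝ) * (1+|y|) ^ (-(3/2):ℝ) := by ring

theorem reflection_estimate (M M' r b : ℝ) (hM : 0 < M) (hM' : M < M')
    (hr : r < 0) :
    ∃ C > 0, ∀ (x t : ℝ), 0 < t →
      (∫ y in Set.Iic (0:ℝ),
          t ^ (-(1/2 : ℝ)) * Real.exp (-(x - r*y - b*t)^2 / (M*t)) *
            (1 + |y|) ^ (-(3/2 : ℝ))) ≤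
        C * (min (t ^ (-(1/2 : ℝ))) ((1 + |x - b*t|) ^ (-(3/2 : ℝ))) +
          (1 + t) ^ (-(1/2 : ℝ)) * Real.exp (-(x - b*t)^2 / (M'*t))) := by
  have hM'0 : 0 < M' := hM.trans hM'
  have hrne : r ≠ 0 := ne_of_lt hr
  set ρ : ℝ := -r with hρdef
  have hρ : 0 < ρ := neg_pos.mpr hr
  have habs : |r| = ρ := abs_of_neg hr
  set θ : ℝ := Real.sqrt (M/M') with hθdef
  have hθ0 : 0 ≤ θ := Real.sqrt_nonneg _
  have hθsq : θ^2 = M/M' := Real.sq_sqrt (by positivity)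
  have hθ1 : θ < 1 := by
    rw [show (1:ℝ) = Real.sqrt 1 by simp [Real.sqrt_one]]
    exact Real.sqrt_lt_sqrt (by positivity) (by rw [div_lt_one hM'0]; exact hM')
  set lam : ℝ := (1-θ)/2 with hlamdef
  have hlam0 : 0 < lam := by rw [hlamdef]; linarith
  have hlam1 : lam < 1 := by rw [hlamdef]; linarith
  have hfac : θ < 1 - lam := by rw [hlamdef]; linarith
  set d : ℝ := (1-lam)^2/M - 1/M' with hddef
  have hd : 0 < d := by
    have h2 : M/M' < (1-lam)^2 := by
      rw [← hθsq]
      exact pow_lt_pow_left₀ hfac hθ0 (by norm_num)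
    have h3 := (div_lt_iff₀ hM'0).mp h2
    rw [hddef, sub_pos, div_lt_div_iff₀ hM'0 hM]
    linarith
  set m : ℝ := min 1 (lam/ρ) with hmdef
  have hm0 : 0 < m := lt_min one_pos (by positivity)
  set C1 : ℝ := Real.sqrt 2 * (Real.sqrt (π*M) / ρ + 2) with hC1
  set C2 : ℝ := 2 + Real.sqrt (π*M)/ρ * m ^ (-(3/2):ℝ) with hC2
  set C3 : ℝ := Real.sqrt 2 * (2 + (lam/ρ) * (Real.sqrt (2*d))⁻¹) with hC3
  have hC1p : 0 < C1 := by positivity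
  have hC2p : 0 < C2 := by positivity
  have hC3p : 0 < C3 := by positivity
  refine ⟨C1 + C2 + C3, by positivity, fun x t ht => ?_⟩
  have hMt : 0 < M*t := by positivity
  have hM't : 0 < M'*t := by positivity
  set z : ℝ := x - b*t with hzdef
  set G : ℝ := (1 + t) ^ (-(1/2 : ℝ)) * Real.exp (-z^2 / (M'*t)) with hGdef
  set mn : ℝ := min (t ^ (-(1/2 : ℝ))) ((1 + |z|) ^ (-(3/2 : ℝ))) with hmndef
  have hGpos : 0 < G := by positivity
  have hmn0 : 0 < mn := lt_min (by positivity) (by positivity)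
  have hts : t ^ (-(1/2):ℝ) * Real.sqrt t = 1 := by
    rw [rpow_neg_half_eq t ht.le]
    exact inv_mul_cancel₀ (ne_of_gt (Real.sqrt_pos.mpr ht))
  have htp : 0 < t ^ (-(1/2):ℝ) := by positivity
  have hI : (∫ y in Set.Iic (0:ℝ),
        t ^ (-(1/2 : ℝ)) * Real.exp (-(x - r*y - b*t)^2 / (M*t)) * (1 + |y|) ^ (-(3/2 : ℝ)))
      = ∫ y in Set.Iic (0:ℝ),
        t ^ (-(1/2 : ℝ)) * Real.exp (-(z - r*y)^2 / (M*t)) * (1 + |y|) ^ (-(3/2 : ℝ)) := by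
    refine setIntegral_congr_fun measurableSet_Iic fun y _ => ?_
    rw [show x - r*y - b*t = z - r*y by rw [hzdef]; ring]
  rw [hI]
  have hInt : IntegrableOn (fun y : ℝ =>
      t ^ (-(1/2):ℝ) * Real.exp (-(z - r*y)^2 / (M*t)) * (1+|y|) ^ (-(3/2):ℝ)) (Iic 0) :=
    integrand_integrable M t z r ht hMt
  have hw1 : ∀ y : ℝ, (1+|y|) ^ (-(3/2):ℝ) ≤ 1 := fun y =>
    Real.rpow_le_one_of_one_le_of_nonpos (le_add_of_nonneg_right (abs_nonneg y)) (by norm_num)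
  have hw0 : ∀ y : ℝ, (0:ℝ) ≤ (1+|y|) ^ (-(3/2):ℝ) := fun y => by positivity
  set E : ℝ := Real.exp (-z^2 / (M'*t)) with hEdef
  have hE0 : (0:ℝ) ≤ E := le_of_lt (Real.exp_pos _)
  set A : ℝ := Real.sqrt (π*M) / ρ with hAdef
  have hA0 : (0:ℝ) ≤ A := by positivity
  -- bound (ii) ingredients : pointwise kernel ≤ E on relevant regions handled per case
  rcases le_or_gt z 0 with hz | hz
  · -- z ≤ 0 case
    have hgint : Integrable (fun y : ℝ =>
        (t ^ (-(1/2):ℝ) * E) * Real.exp (-(0 - r*y)^2 / (M*t))) :=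
      (gaussian_integrable_div M t 0 r hM ht hrne).const_mul _
    have hkey : ∀ y : ℝ, y ≤ 0 →
        z^2/(M'*t) + (0 - r*y)^2/(M*t) ≤ (z - r*y)^2/(M*t) := by
      intro y hy
      have hu : 0 ≤ r*y := by nlinarith only [mul_nonneg (neg_nonneg.mpr hr.le) (neg_nonneg.mpr hy)]
      have hzu : 0 ≤ (-z) * (r*y) := mul_nonneg (neg_nonneg.mpr hz) hu
      have hsq : z^2 + (r*y)^2 ≤ (z - r*y)^2 := by nlinarith only [hzu]
      have e1 : (z^2 + (r*y)^2)/(M*t) ≤ (z - r*y)^2/(M*t) := by gcongr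
      have e2 : z^2/(M'*t) ≤ z^2/(M*t) :=
        div_le_div_of_nonneg_left (sq_nonneg z) hMt (mul_le_mul_of_nonneg_right hM'.le ht.le)
      have e3 : (z^2 + (r*y)^2)/(M*t) = z^2/(M*t) + (r*y)^2/(M*t) := by ring
      have e4 : (0 - r*y)^2 = (r*y)^2 := by ring
      rw [e4]; linarith only [e1, e2, e3]
    have hpt : ∀ y ∈ Iic (0:ℝ),
        t ^ (-(1/2):ℝ) * Real.exp (-(z - r*y)^2 / (M*t)) * (1+|y|) ^ (-(3/2):ℝ)
          ≤ (t ^ (-(1/2):ℝ) * E) * Real.exp (-(0 - r*y)^2 / (M*t)) := by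
      intro y hy
      have hexp : Real.exp (-(z - r*y)^2 / (M*t))
          ≤ E * Real.exp (-(0 - r*y)^2 / (M*t)) := by
        rw [hEdef, ← Real.exp_add]
        apply Real.exp_le_exp.mpr
        have := hkey y hy
        have q1 : -(z - r*y)^2 / (M*t) = -((z - r*y)^2/(M*t)) := by ring
        have q2 : -z^2 / (M'*t) = -(z^2/(M'*t)) := by ring
        have q3 : -(0 - r*y)^2 / (M*t) = -((0 - r*y)^2/(M*t)) := by ring
        rw [q1, q2, q3]; linarith only [this]
      calc t ^ (-(1/2):ℝ) * Real.exp (-(z - r*y)^2 / (M*t)) * (1+|y|) ^ (-(3/2):ℝ)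
          ≤ t ^ (-(1/2):ℝ) * Real.exp (-(z - r*y)^2 / (M*t)) * 1 :=
            mul_le_mul_of_nonneg_left (hw1 y) (by positivity)
      _ = t ^ (-(1/2):ℝ) * Real.exp (-(z - r*y)^2 / (M*t)) := by ring
      _ ≤ t ^ (-(1/2):ℝ) * (E * Real.exp (-(0 - r*y)^2 / (M*t))) :=
            mul_le_mul_of_nonneg_left hexp htp.le
      _ = (t ^ (-(1/2):ℝ) * E) * Real.exp (-(0 - r*y)^2 / (M*t)) := by ring
    have hb1 : (∫ y in Set.Iic (0:ℝ),
        t ^ (-(1/2 : ℝ)) * Real.exp (-(z - r*y)^2 / (M*t)) * (1 + |y|) ^ (-(3/2 : ℝ)))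
        ≤ A * E := by
      calc (∫ y in Set.Iic (0:ℝ),
          t ^ (-(1/2 : ℝ)) * Real.exp (-(z - r*y)^2 / (M*t)) * (1 + |y|) ^ (-(3/2 : ℝ)))
          ≤ ∫ y in Set.Iic (0:ℝ),
            (t ^ (-(1/2):ℝ) * E) * Real.exp (-(0 - r*y)^2 / (M*t)) :=
            setIntegral_mono_on hInt hgint.integrableOn measurableSet_Iic hpt
      _ ≤ ∫ y : ℝ, (t ^ (-(1/2):ℝ) * E) * Real.exp (-(0 - r*y)^2 / (M*t)) :=
            setIntegral_le_integral hgint (Filter.Eventually.of_forall fun y => by positivity)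
      _ = (t ^ (-(1/2):ℝ) * E) * (|r|⁻¹ * Real.sqrt (π * (M*t))) := by
            rw [integral_const_mul, gaussian_integral_div M t 0 r hM ht hrne]
      _ = (t ^ (-(1/2):ℝ) * Real.sqrt t) * (Real.sqrt (π*M) * ρ⁻¹ * E) := by
            rw [habs, show π * (M*t) = (π*M)*t by ring, Real.sqrt_mul (by positivity) t]
            ring
      _ = A * E := by rw [hts, hAdef]; ring
    have hb2 : (∫ y in Set.Iic (0:ℝ),
        t ^ (-(1/2 : ℝ)) * Real.exp (-(z - r*y)^2 / (M*t)) * (1 + |y|) ^ (-(3/2 : ℝ)))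
        ≤ 2 * (t ^ (-(1/2):ℝ) * E) := by
      have hgint2 : IntegrableOn (fun y : ℝ =>
          (t ^ (-(1/2):ℝ) * E) * (1+|y|) ^ (-(3/2):ℝ)) (Iic 0) :=
        weight_Iic_integrable.const_mul _
      have hpt2 : ∀ y ∈ Iic (0:ℝ),
          t ^ (-(1/2):ℝ) * Real.exp (-(z - r*y)^2 / (M*t)) * (1+|y|) ^ (-(3/2):ℝ)
            ≤ (t ^ (-(1/2):ℝ) * E) * (1+|y|) ^ (-(3/2):ℝ) := by
        intro y hy
        have hexp : Real.exp (-(z - r*y)^2 / (M*t)) ≤ E := by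
          rw [hEdef]
          apply Real.exp_le_exp.mpr
          have h5 := hkey y hy
          have h6 : (0:ℝ) ≤ (0 - r*y)^2/(M*t) := by positivity
          have q1 : -(z - r*y)^2 / (M*t) = -((z - r*y)^2/(M*t)) := by ring
          have q2 : -z^2 / (M'*t) = -(z^2/(M'*t)) := by ring
          rw [q1, q2]; linarith only [h5, h6]
        exact mul_le_mul_of_nonneg_right (mul_le_mul_of_nonneg_left hexp htp.le) (hw0 y)
      calc (∫ y in Set.Iic (0:ℝ),
          t ^ (-(1/2 : ℝ)) * Real.exp (-(z - r*y)^2 / (M*t)) * (1 + |y|) ^ (-(3/2 : ℝ)))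
          ≤ ∫ y in Set.Iic (0:ℝ), (t ^ (-(1/2):ℝ) * E) * (1+|y|) ^ (-(3/2):ℝ) :=
            setIntegral_mono_on hInt hgint2 measurableSet_Iic hpt2
      _ = (t ^ (-(1/2):ℝ) * E) * 2 := by rw [integral_const_mul, weight_Iic_value]
      _ = 2 * (t ^ (-(1/2):ℝ) * E) := by ring
    have hfin : (∫ y in Set.Iic (0:ℝ),
        t ^ (-(1/2 : ℝ)) * Real.exp (-(z - r*y)^2 / (M*t)) * (1 + |y|) ^ (-(3/2 : ℝ)))
        ≤ C1 * G := by
      rcases le_total t 1 with ht1 | ht1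
      · have hs := one_le_sqrt2_mul t ht.le ht1
        have hsE : (0:ℝ) ≤ Real.sqrt 2 * (1+t) ^ (-(1/2):ℝ) * E := by positivity
        calc (∫ y in Set.Iic (0:ℝ),
            t ^ (-(1/2 : ℝ)) * Real.exp (-(z - r*y)^2 / (M*t)) * (1 + |y|) ^ (-(3/2 : ℝ)))
            ≤ A * E := hb1
        _ ≤ A * (Real.sqrt 2 * (1+t) ^ (-(1/2):ℝ) * E) :=
              mul_le_mul_of_nonneg_left (le_mul_of_one_le_left hE0 hs) hA0
        _ ≤ (A + 2) * (Real.sqrt 2 * (1+t) ^ (-(1/2):ℝ) * E) :=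
              mul_le_mul_of_nonneg_right (le_add_of_nonneg_right (by norm_num)) hsE
        _ = C1 * G := by rw [hC1, hGdef, hAdef, hEdef]; ring
      · have hs := rpow_le_sqrt2_mul t ht1
        calc (∫ y in Set.Iic (0:ℝ),
            t ^ (-(1/2 : ℝ)) * Real.exp (-(z - r*y)^2 / (M*t)) * (1 + |y|) ^ (-(3/2 : ℝ)))
            ≤ 2 * (t ^ (-(1/2):ℝ) * E) := hb2
        _ ≤ 2 * (Real.sqrt 2 * (1+t) ^ (-(1/2):ℝ) * E) := by
              exact mul_le_mul_of_nonneg_left (mul_le_mul_of_nonneg_right hs hE0) (by norm_num)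
        _ ≤ (A + 2) * (Real.sqrt 2 * (1+t) ^ (-(1/2):ℝ) * E) :=
              mul_le_mul_of_nonneg_right (le_add_of_nonneg_left hA0) (by positivity)
        _ = C1 * G := by rw [hC1, hGdef, hAdef, hEdef]; ring
    calc (∫ y in Set.Iic (0:ℝ),
        t ^ (-(1/2 : ℝ)) * Real.exp (-(z - r*y)^2 / (M*t)) * (1 + |y|) ^ (-(3/2 : ℝ)))
        ≤ C1 * G := hfin
    _ ≤ C1 * (mn + G) := mul_le_mul_of_nonneg_left (le_add_of_nonneg_left hmn0.le) hC1p.le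
    _ ≤ (C1 + C2 + C3) * (mn + G) :=
          mul_le_mul_of_nonneg_right (by linarith only [hC2p, hC3p]) (by positivity)
  · -- z > 0 case
    have hz0 : (0:ℝ) ≤ z := hz.le
    have habsz : |z| = z := abs_of_pos hz
    set a : ℝ := -((lam/ρ)*z) with hadef
    have ha : a ≤ 0 := neg_nonpos.mpr (by positivity)
    have hdisj : Disjoint (Iic a) (Ioc a (0:ℝ)) := Iic_disjoint_Ioc le_rfl
    have hint1 : IntegrableOn (fun y : ℝ =>
        t ^ (-(1/2):ℝ) * Real.exp (-(z - r*y)^2 / (M*t)) * (1+|y|) ^ (-(3/2):ℝ)) (Iic a) :=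
      hInt.mono_set (Iic_subset_Iic.mpr ha)
    have hint2 : IntegrableOn (fun y : ℝ =>
        t ^ (-(1/2):ℝ) * Real.exp (-(z - r*y)^2 / (M*t)) * (1+|y|) ^ (-(3/2):ℝ)) (Ioc a 0) :=
      hInt.mono_set Ioc_subset_Iic_self
    have hIsplit : (∫ y in Set.Iic (0:ℝ),
        t ^ (-(1/2 : ℝ)) * Real.exp (-(z - r*y)^2 / (M*t)) * (1 + |y|) ^ (-(3/2 : ℝ)))
        = (∫ y in Set.Iic a,
            t ^ (-(1/2 : ℝ)) * Real.exp (-(z - r*y)^2 / (M*t)) * (1 + |y|) ^ (-(3/2 : ℝ)))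
          + ∫ y in Set.Ioc a 0,
            t ^ (-(1/2 : ℝ)) * Real.exp (-(z - r*y)^2 / (M*t)) * (1 + |y|) ^ (-(3/2 : ℝ)) := by
      rw [← Iic_union_Ioc_eq_Iic ha]
      exact setIntegral_union hdisj measurableSet_Ioc hint1 hint2
    -- FAR PART
    set Kz : ℝ := (1 + (lam/ρ)*z) ^ (-(3/2):ℝ) with hKzdef
    have hKz0 : 0 ≤ Kz := by positivity
    have hgfar : Integrable (fun y : ℝ =>
        (Kz * t ^ (-(1/2):ℝ)) * Real.exp (-(z - r*y)^2 / (M*t))) :=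
      (gaussian_integrable_div M t z r hM ht hrne).const_mul _
    have hptfar : ∀ y ∈ Iic a,
        t ^ (-(1/2):ℝ) * Real.exp (-(z - r*y)^2 / (M*t)) * (1+|y|) ^ (-(3/2):ℝ)
          ≤ (Kz * t ^ (-(1/2):ℝ)) * Real.exp (-(z - r*y)^2 / (M*t)) := by
      intro y hy
      have hy0 : y ≤ 0 := le_trans hy ha
      have hyabs : (lam/ρ)*z ≤ |y| := by
        rw [abs_of_nonpos hy0]
        have : y ≤ -((lam/ρ)*z) := hy
        linarith only [this]
      have hwK : (1+|y|) ^ (-(3/2):ℝ) ≤ Kz := by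
        rw [hKzdef]
        exact Real.rpow_le_rpow_of_nonpos (by positivity) (by linarith only [hyabs]) (by norm_num)
      calc t ^ (-(1/2):ℝ) * Real.exp (-(z - r*y)^2 / (M*t)) * (1+|y|) ^ (-(3/2):ℝ)
          ≤ t ^ (-(1/2):ℝ) * Real.exp (-(z - r*y)^2 / (M*t)) * Kz :=
            mul_le_mul_of_nonneg_left hwK (by positivity)
      _ = (Kz * t ^ (-(1/2):ℝ)) * Real.exp (-(z - r*y)^2 / (M*t)) := by ring
    have hfar1 : (∫ y in Set.Iic a,
        t ^ (-(1/2 : ℝ)) * Real.exp (-(z - r*y)^2 / (M*t)) * (1 + |y|) ^ (-(3/2 : ℝ)))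
        ≤ Kz * A := by
      calc (∫ y in Set.Iic a,
          t ^ (-(1/2 : ℝ)) * Real.exp (-(z - r*y)^2 / (M*t)) * (1 + |y|) ^ (-(3/2 : ℝ)))
          ≤ ∫ y in Set.Iic a, (Kz * t ^ (-(1/2):ℝ)) * Real.exp (-(z - r*y)^2 / (M*t)) :=
            setIntegral_mono_on hint1 hgfar.integrableOn measurableSet_Iic hptfar
      _ ≤ ∫ y : ℝ, (Kz * t ^ (-(1/2):ℝ)) * Real.exp (-(z - r*y)^2 / (M*t)) :=
            setIntegral_le_integral hgfar (Filter.Eventually.of_forall fun y => by positivity)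
      _ = (Kz * t ^ (-(1/2):ℝ)) * (|r|⁻¹ * Real.sqrt (π * (M*t))) := by
            rw [integral_const_mul, gaussian_integral_div M t z r hM ht hrne]
      _ = (t ^ (-(1/2):ℝ) * Real.sqrt t) * (Kz * (Real.sqrt (π*M) * ρ⁻¹)) := by
            rw [habs, show π * (M*t) = (π*M)*t by ring, Real.sqrt_mul (by positivity) t]
            ring
      _ = Kz * A := by rw [hts, hAdef]; ring
    have hfar2 : (∫ y in Set.Iic a,
        t ^ (-(1/2 : ℝ)) * Real.exp (-(z - r*y)^2 / (M*t)) * (1 + |y|) ^ (-(3/2 : ℝ)))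
        ≤ 2 * t ^ (-(1/2):ℝ) := by
      have hsub : (∫ y in Set.Iic a,
          t ^ (-(1/2 : ℝ)) * Real.exp (-(z - r*y)^2 / (M*t)) * (1 + |y|) ^ (-(3/2 : ℝ)))
          ≤ ∫ y in Set.Iic (0:ℝ),
            t ^ (-(1/2 : ℝ)) * Real.exp (-(z - r*y)^2 / (M*t)) * (1 + |y|) ^ (-(3/2 : ℝ)) :=
        setIntegral_mono_set hInt (Filter.Eventually.of_forall fun y => by positivity)
          (HasSubset.Subset.eventuallyLE (Iic_subset_Iic.mpr ha))
      have hcr : (∫ y in Set.Iic (0:ℝ),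
          t ^ (-(1/2 : ℝ)) * Real.exp (-(z - r*y)^2 / (M*t)) * (1 + |y|) ^ (-(3/2 : ℝ)))
          ≤ 2 * t ^ (-(1/2):ℝ) := by
        calc (∫ y in Set.Iic (0:ℝ),
            t ^ (-(1/2 : ℝ)) * Real.exp (-(z - r*y)^2 / (M*t)) * (1 + |y|) ^ (-(3/2 : ℝ)))
            ≤ ∫ y in Set.Iic (0:ℝ), t ^ (-(1/2):ℝ) * (1+|y|) ^ (-(3/2):ℝ) := by
              refine setIntegral_mono_on hInt (weight_Iic_integrable.const_mul _)
                measurableSet_Iic (fun y _ => ?_)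
              have h7 := kernel_le_one (z - r*y) (M*t) hMt
              calc t ^ (-(1/2):ℝ) * Real.exp (-(z - r*y)^2 / (M*t)) * (1+|y|) ^ (-(3/2):ℝ)
                  ≤ t ^ (-(1/2):ℝ) * 1 * (1+|y|) ^ (-(3/2):ℝ) :=
                    mul_le_mul_of_nonneg_right (mul_le_mul_of_nonneg_left h7 htp.le) (hw0 y)
              _ = t ^ (-(1/2):ℝ) * (1+|y|) ^ (-(3/2):ℝ) := by ring
        _ = t ^ (-(1/2):ℝ) * 2 := by rw [integral_const_mul, weight_Iic_value]
        _ = 2 * t ^ (-(1/2):ℝ) := by ring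
      linarith only [hsub, hcr]
    have hKzle : Kz ≤ m ^ (-(3/2):ℝ) * (1+z) ^ (-(3/2):ℝ) := by
      rw [hKzdef, hmdef]
      exact weight_shift_le (lam/ρ) z (by positivity) hz0
    have hfar : (∫ y in Set.Iic a,
        t ^ (-(1/2 : ℝ)) * Real.exp (-(z - r*y)^2 / (M*t)) * (1 + |y|) ^ (-(3/2 : ℝ)))
        ≤ C2 * mn := by
      rcases min_cases (t ^ (-(1/2):ℝ)) ((1 + |z|) ^ (-(3/2):ℝ)) with ⟨hmeq, _⟩ | ⟨hmeq, _⟩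
      · calc (∫ y in Set.Iic a,
            t ^ (-(1/2 : ℝ)) * Real.exp (-(z - r*y)^2 / (M*t)) * (1 + |y|) ^ (-(3/2 : ℝ)))
            ≤ 2 * t ^ (-(1/2):ℝ) := hfar2
        _ = 2 * mn := by rw [hmndef, hmeq]
        _ ≤ C2 * mn := mul_le_mul_of_nonneg_right
              (le_add_of_nonneg_right (by positivity)) hmn0.le
      · calc (∫ y in Set.Iic a,
            t ^ (-(1/2 : ℝ)) * Real.exp (-(z - r*y)^2 / (M*t)) * (1 + |y|) ^ (-(3/2 : ℝ)))
            ≤ Kz * A := hfar1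
        _ ≤ (m ^ (-(3/2):ℝ) * (1+z) ^ (-(3/2):ℝ)) * A :=
              mul_le_mul_of_nonneg_right hKzle hA0
        _ = (A * m ^ (-(3/2):ℝ)) * (1+z) ^ (-(3/2):ℝ) := by ring
        _ = (A * m ^ (-(3/2):ℝ)) * mn := by rw [hmndef, hmeq, habsz]
        _ ≤ C2 * mn := mul_le_mul_of_nonneg_right
              (le_add_of_nonneg_left (by norm_num)) hmn0.le
    -- NEAR PART
    have hqz : ((1-lam)^2*z^2)/(M*t) = z^2/(M'*t) + (d*z^2)/t := by
      rw [hddef]; field_simp; ring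
    set F : ℝ := Real.exp (-(d*z^2)/t) with hFdef
    have hF0 : (0:ℝ) ≤ F := le_of_lt (Real.exp_pos _)
    have hF1 : F ≤ 1 := by
      rw [hFdef, Real.exp_le_one_iff]
      exact div_nonpos_of_nonpos_of_nonneg (neg_nonpos.mpr (by positivity)) ht.le
    have hptnear : ∀ y ∈ Ioc a (0:ℝ),
        t ^ (-(1/2):ℝ) * Real.exp (-(z - r*y)^2 / (M*t)) * (1+|y|) ^ (-(3/2):ℝ)
          ≤ ((t ^ (-(1/2):ℝ) * E) * F) * (1+|y|) ^ (-(3/2):ℝ) := by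
      intro y hy
      have hu0 : 0 ≤ r*y := by
        nlinarith only [mul_nonneg (neg_nonneg.mpr hr.le) (neg_nonneg.mpr hy.2)]
      have hra : r*a = lam*z := by
        rw [hadef, hρdef]
        field_simp
      have hu1 : r*y ≤ lam*z := by
        nlinarith only [mul_nonneg (neg_nonneg.mpr hr.le) (sub_nonneg.mpr hy.1.le), hra]
      have h1 : (1-lam)*z ≤ z - r*y := by linarith only [hu1]
      have h2 : (0:ℝ) ≤ (1-lam)*z := mul_nonneg (by linarith only [hlam1]) hz0
      have hsq : (1-lam)^2*z^2 ≤ (z - r*y)^2 := by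
        have h3 := pow_le_pow_left₀ h2 h1 2
        calc (1-lam)^2*z^2 = ((1-lam)*z)^2 := by ring
        _ ≤ (z - r*y)^2 := h3
      have hexp : Real.exp (-(z - r*y)^2 / (M*t)) ≤ E * F := by
        rw [hEdef, hFdef, ← Real.exp_add]
        apply Real.exp_le_exp.mpr
        have e1 : ((1-lam)^2*z^2)/(M*t) ≤ (z - r*y)^2/(M*t) := by gcongr
        have q1 : -(z - r*y)^2 / (M*t) = -((z - r*y)^2/(M*t)) := by ring
        have q2 : -z^2 / (M'*t) = -(z^2/(M'*t)) := by ring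
        have q3 : -(d*z^2) / t = -((d*z^2)/t) := by ring
        rw [q1, q2, q3]
        linarith only [e1, hqz]
      calc t ^ (-(1/2):ℝ) * Real.exp (-(z - r*y)^2 / (M*t)) * (1+|y|) ^ (-(3/2):ℝ)
          ≤ t ^ (-(1/2):ℝ) * (E * F) * (1+|y|) ^ (-(3/2):ℝ) :=
            mul_le_mul_of_nonneg_right (mul_le_mul_of_nonneg_left hexp htp.le) (hw0 y)
      _ = ((t ^ (-(1/2):ℝ) * E) * F) * (1+|y|) ^ (-(3/2):ℝ) := by ring
    set W : ℝ := ∫ y in Set.Ioc a (0:ℝ), (1+|y|) ^ (-(3/2):ℝ) with hWdef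
    have hW0 : 0 ≤ W := setIntegral_nonneg measurableSet_Ioc (fun y _ => hw0 y)
    have hW2 : W ≤ 2 := by
      have h11 : (∫ y in Set.Ioc a (0:ℝ), (1+|y|) ^ (-(3/2):ℝ))
          ≤ ∫ y in Set.Iic (0:ℝ), (1+|y|) ^ (-(3/2):ℝ) :=
        setIntegral_mono_set weight_Iic_integrable
          (Filter.Eventually.of_forall fun y => hw0 y)
          (HasSubset.Subset.eventuallyLE Ioc_subset_Iic_self)
      rw [weight_Iic_value] at h11
      exact h11
    have hWa : W ≤ (lam/ρ)*z := by
      have hcon : IntegrableOn (fun _ : ℝ => (1:ℝ)) (Ioc a 0) :=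
        integrableOn_const measure_Ioc_lt_top.ne
      have h8 : W ≤ ∫ _ in Set.Ioc a (0:ℝ), (1:ℝ) := by
        rw [hWdef]
        exact setIntegral_mono_on (weight_Iic_integrable.mono_set Ioc_subset_Iic_self)
          hcon measurableSet_Ioc (fun y _ => hw1 y)
      have h9 : (∫ _ in Set.Ioc a (0:ℝ), (1:ℝ)) = (lam/ρ)*z := by
        rw [setIntegral_const, measureReal_def, Real.volume_Ioc, smul_eq_mul, mul_one,
          ENNReal.toReal_ofReal (by linarith only [ha])]
        rw [hadef]; ring
      linarith only [h8, h9]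
    have hnear1 : (∫ y in Set.Ioc a (0:ℝ),
        t ^ (-(1/2 : ℝ)) * Real.exp (-(z - r*y)^2 / (M*t)) * (1 + |y|) ^ (-(3/2 : ℝ)))
        ≤ ((t ^ (-(1/2):ℝ) * E) * F) * W := by
      calc (∫ y in Set.Ioc a (0:ℝ),
          t ^ (-(1/2 : ℝ)) * Real.exp (-(z - r*y)^2 / (M*t)) * (1 + |y|) ^ (-(3/2 : ℝ)))
          ≤ ∫ y in Set.Ioc a (0:ℝ), ((t ^ (-(1/2):ℝ) * E) * F) * (1+|y|) ^ (-(3/2):ℝ) :=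
            setIntegral_mono_on hint2
              ((weight_Iic_integrable.mono_set Ioc_subset_Iic_self).const_mul _)
              measurableSet_Ioc hptnear
      _ = ((t ^ (-(1/2):ℝ) * E) * F) * W := by rw [integral_const_mul, hWdef]
    have hnear : (∫ y in Set.Ioc a (0:ℝ),
        t ^ (-(1/2 : ℝ)) * Real.exp (-(z - r*y)^2 / (M*t)) * (1 + |y|) ^ (-(3/2 : ℝ)))
        ≤ C3 * G := by
      rcases le_total t 1 with ht1 | ht1
      · have hs := one_le_sqrt2_mul t ht.le ht1
        have hzt : z * t ^ (-(1/2):ℝ) = Real.sqrt (z^2/t) := by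
          rw [rpow_neg_half_eq t ht.le, Real.sqrt_div (sq_nonneg z), Real.sqrt_sq hz0,
            div_eq_mul_inv]
        have hF' : F = Real.exp (-(d*(z^2/t))) := by
          rw [hFdef]; exact Real.exp_eq_exp.mpr (by ring)
        calc (∫ y in Set.Ioc a (0:ℝ),
            t ^ (-(1/2 : ℝ)) * Real.exp (-(z - r*y)^2 / (M*t)) * (1 + |y|) ^ (-(3/2 : ℝ)))
            ≤ ((t ^ (-(1/2):ℝ) * E) * F) * W := hnear1
        _ ≤ ((t ^ (-(1/2):ℝ) * E) * F) * ((lam/ρ)*z) :=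
              mul_le_mul_of_nonneg_left hWa (by positivity)
        _ = (lam/ρ) * ((z * t ^ (-(1/2):ℝ)) * F) * E := by ring
        _ = (lam/ρ) * (Real.sqrt (z^2/t) * Real.exp (-(d*(z^2/t)))) * E := by
              rw [hzt, hF']
        _ ≤ (lam/ρ) * (Real.sqrt (2*d))⁻¹ * E := by
              have h10 := sqrt_mul_exp_le d (z^2/t) hd (by positivity)
              exact mul_le_mul_of_nonneg_right
                (mul_le_mul_of_nonneg_left h10 (by positivity)) hE0
        _ ≤ (lam/ρ) * (Real.sqrt (2*d))⁻¹ * (Real.sqrt 2 * (1+t) ^ (-(1/2):ℝ) * E) :=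
              mul_le_mul_of_nonneg_left (le_mul_of_one_le_left hE0 hs) (by positivity)
        _ ≤ (2 + (lam/ρ) * (Real.sqrt (2*d))⁻¹) * (Real.sqrt 2 * (1+t) ^ (-(1/2):ℝ) * E) :=
              mul_le_mul_of_nonneg_right (le_add_of_nonneg_left (by norm_num)) (by positivity)
        _ = C3 * G := by rw [hC3, hGdef, hEdef]; ring
      · have hs := rpow_le_sqrt2_mul t ht1
        calc (∫ y in Set.Ioc a (0:ℝ),
            t ^ (-(1/2 : ℝ)) * Real.exp (-(z - r*y)^2 / (M*t)) * (1 + |y|) ^ (-(3/2 : ℝ)))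
            ≤ ((t ^ (-(1/2):ℝ) * E) * F) * W := hnear1
        _ ≤ ((t ^ (-(1/2):ℝ) * E) * 1) * 2 := by
              apply mul_le_mul (mul_le_mul_of_nonneg_left hF1 (by positivity)) hW2 hW0
                (by positivity)
        _ = 2 * (t ^ (-(1/2):ℝ) * E) := by ring
        _ ≤ 2 * (Real.sqrt 2 * (1+t) ^ (-(1/2):ℝ) * E) := by
              exact mul_le_mul_of_nonneg_left (mul_le_mul_of_nonneg_right hs hE0) (by norm_num)
        _ ≤ (2 + (lam/ρ) * (Real.sqrt (2*d))⁻¹) * (Real.sqrt 2 * (1+t) ^ (-(1/2):ℝ) * E) :=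
              mul_le_mul_of_nonneg_right (le_add_of_nonneg_right (by positivity)) (by positivity)
        _ = C3 * G := by rw [hC3, hGdef, hEdef]; ring
    calc (∫ y in Set.Iic (0:ℝ),
        t ^ (-(1/2 : ℝ)) * Real.exp (-(z - r*y)^2 / (M*t)) * (1 + |y|) ^ (-(3/2 : ℝ)))
        = _ + _ := hIsplit
    _ ≤ C2 * mn + C3 * G := add_le_add hfar hnear
    _ ≤ (C1 + C2 + C3) * (mn + G) := by
          nlinarith only [mul_nonneg hC1p.le hmn0.le, mul_nonneg hC1p.le hGpos.le,
            mul_nonneg hC2p.le hGpos.le, mul_nonneg hC3p.le hmn0.le]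
end

section
/- Let a > 0 and M > 0. There exists a constant C > 0 such that for all t > 0: ∫_{−∞}^0 t^{−1/2} e^{−(y+at)²/(Mt)} (1+|y|)^{−3/2} dy ≤ C (1+t)^{−3/2}. -/
open MeasureTheory Set Real

lemma jap_int : Integrable (fun y : ℝ => (1 + |y|) ^ (-(3/2:ℝ))) := by
  have h := integrable_one_add_norm (E := ℝ) (μ := volume)
    (by rw [Module.finrank_self]; norm_num : ((Module.finrank ℝ ℝ : ℝ)) < 3/2)
  simpa [Real.norm_eq_abs] using h

lemma gauss_bound (b c : ℝ) (hb : 0 < b) :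
    ∫ y in Iic (0:ℝ), Real.exp (-b * (y + c)^2) ≤ Real.sqrt (π / b) := by
  have h1 : ∫ y in Iic (0:ℝ), Real.exp (-b * (y + c)^2)
      ≤ ∫ y : ℝ, Real.exp (-b * (y + c)^2) :=
    setIntegral_le_integral ((integrable_exp_neg_mul_sq hb).comp_add_right c)
      (ae_of_all _ fun y => (Real.exp_pos _).le)
  have h2 : ∫ y : ℝ, Real.exp (-b * (y + c)^2) = Real.sqrt (π / b) := by
    rw [integral_add_right_eq_self (fun y : ℝ => Real.exp (-b * y^2)) c, integral_gaussian]
  exact h1.trans_eq h2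

lemma exp_decay (a M t : ℝ) (ha : 0 < a) (hM : 0 < M) (ht : 1 ≤ t) :
    Real.exp (-(a^2/(4*M)*t)) ≤ (256*M^2/a^4) * (1+t)^(-(3/2:ℝ)) := by
  have ht0 : (0:ℝ) < t := lt_of_lt_of_le one_pos ht
  set x := a^2/(4*M)*t with hx
  have hx0 : 0 < x := by positivity
  have hexp : x^2/4 ≤ Real.exp x := by
    rw [show x = x/2 + x/2 by ring, Real.exp_add]
    nlinarith [Real.add_one_le_exp (x/2), Real.exp_pos (x/2)]
  have h1 : Real.exp (-x) ≤ 4/x^2 := by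
    rw [Real.exp_neg]
    have h := inv_anti₀ (by positivity : (0:ℝ) < x^2/4) hexp
    rwa [inv_div] at h
  have hpow : (1+t)^((3/2:ℝ)) ≤ 4*t^2 := by
    have p1 : (1+t)^((3/2:ℝ)) ≤ (2*t)^((3/2:ℝ)) :=
      Real.rpow_le_rpow (by linarith) (by linarith) (by norm_num)
    have p2 : (2*t)^((3/2:ℝ)) ≤ (2*t)^((2:ℝ)) :=
      Real.rpow_le_rpow_of_exponent_le (by linarith) (by norm_num)
    have p3 : (2*t)^((2:ℝ)) = 4*t^2 := by
      rw [show ((2:ℝ)) = ((2:ℕ):ℝ) from by norm_num, Real.rpow_natCast]; ring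
    calc (1+t)^((3/2:ℝ)) ≤ (2*t)^((2:ℝ)) := p1.trans p2
      _ = 4*t^2 := p3
  have hP : 0 < (1+t)^((3/2:ℝ)) := Real.rpow_pos_of_pos (by linarith) _
  rw [Real.rpow_neg (by linarith : (0:ℝ) ≤ 1+t), ← div_eq_mul_inv, le_div_iff₀ hP]
  calc Real.exp (-x) * (1+t)^((3/2:ℝ)) ≤ (4/x^2) * (4*t^2) :=
        mul_le_mul h1 hpow (by positivity) (by positivity)
    _ = 256*M^2/a^4 := by
        rw [hx]; field_simp; ring

theorem excited_time_derivative_estimate (a M : ℝ) (ha : 0 < a) (hM : 0 < M) :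
    ∃ C > 0, ∀ t : ℝ, 0 < t →
      (∫ y in Set.Iic (0:ℝ),
          t ^ (-(1/2:ℝ)) * Real.exp (-(y + a*t)^2 / (M*t)) *
            (1 + |y|) ^ (-(3/2:ℝ))) ≤
        C * (1 + t) ^ (-(3/2:ℝ)) := by
  set I := ∫ y : ℝ, (1 + |y|) ^ (-(3/2:ℝ)) with hIdef
  have hI0 : 0 ≤ I := integral_nonneg fun y => Real.rpow_nonneg (by positivity) _
  set m := min 1 (a/2) with hmdef
  have hm0 : 0 < m := lt_min one_pos (by positivity)
  refine ⟨Real.sqrt (π*M) * 2^((3/2:ℝ)) + I * (256*M^2/a^4)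
      + Real.sqrt (π*M) * m^(-(3/2:ℝ)) + 1, by positivity, fun t ht => ?_⟩
  have hb : 0 < (M*t)⁻¹ := by positivity
  have hrw : ∀ y : ℝ, -(y + a*t)^2 / (M*t) = -(M*t)⁻¹ * (y + a*t)^2 := fun y => by ring
  simp_rw [hrw]
  have hG : ∫ y in Iic (0:ℝ), Real.exp (-(M*t)⁻¹ * (y + a*t)^2)
      ≤ Real.sqrt (π*M) * Real.sqrt t := by
    have h := gauss_bound (M*t)⁻¹ (a*t) hb
    rwa [div_inv_eq_mul, show π * (M*t) = (π*M)*t by ring,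
      Real.sqrt_mul (by positivity)] at h
  have hGint : Integrable (fun y : ℝ => Real.exp (-(M*t)⁻¹ * (y + a*t)^2)) :=
    (integrable_exp_neg_mul_sq hb).comp_add_right (a*t)
  have hts : t ^ (-(1/2:ℝ)) * (Real.sqrt (π*M) * Real.sqrt t) = Real.sqrt (π*M) := by
    rw [Real.sqrt_eq_rpow t,
      show t ^ (-(1/2:ℝ)) * (Real.sqrt (π*M) * t ^ ((1:ℝ)/2))
        = Real.sqrt (π*M) * (t ^ (-(1/2:ℝ)) * t ^ ((1:ℝ)/2)) by ring,
      ← Real.rpow_add ht]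
    norm_num
  have htpos : 0 ≤ t ^ (-(1/2:ℝ)) := Real.rpow_nonneg ht.le _
  have h1t : (0:ℝ) < 1 + t := by linarith
  have hptnn : 0 ≤ (1+t)^(-(3/2:ℝ)) := Real.rpow_nonneg h1t.le _
  rcases le_or_gt t 1 with htle | htgt
  · -- small time
    have hpt : (∫ y in Iic (0:ℝ),
          t ^ (-(1/2:ℝ)) * Real.exp (-(M*t)⁻¹ * (y + a*t)^2) * (1 + |y|) ^ (-(3/2:ℝ)))
        ≤ ∫ y in Iic (0:ℝ), t ^ (-(1/2:ℝ)) * Real.exp (-(M*t)⁻¹ * (y + a*t)^2) := by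
      refine integral_mono_of_nonneg (ae_of_all _ fun y => by positivity)
        ((hGint.const_mul _).integrableOn) (ae_of_all _ fun y => ?_)
      have h1 : (1 + |y|) ^ (-(3/2:ℝ)) ≤ 1 :=
        Real.rpow_le_one_of_one_le_of_nonpos (le_add_of_nonneg_right (abs_nonneg y))
          (by norm_num)
      calc t ^ (-(1/2:ℝ)) * Real.exp (-(M*t)⁻¹ * (y + a*t)^2) * (1 + |y|) ^ (-(3/2:ℝ))
          ≤ t ^ (-(1/2:ℝ)) * Real.exp (-(M*t)⁻¹ * (y + a*t)^2) * 1 :=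
            mul_le_mul_of_nonneg_left h1 (by positivity)
        _ = t ^ (-(1/2:ℝ)) * Real.exp (-(M*t)⁻¹ * (y + a*t)^2) := mul_one _
    have h2 : (∫ y in Iic (0:ℝ), t ^ (-(1/2:ℝ)) * Real.exp (-(M*t)⁻¹ * (y + a*t)^2))
        = t ^ (-(1/2:ℝ)) * ∫ y in Iic (0:ℝ), Real.exp (-(M*t)⁻¹ * (y + a*t)^2) :=
      integral_const_mul _ _
    have h3 : (∫ y in Iic (0:ℝ),
          t ^ (-(1/2:ℝ)) * Real.exp (-(M*t)⁻¹ * (y + a*t)^2) * (1 + |y|) ^ (-(3/2:ℝ)))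
        ≤ Real.sqrt (π*M) := by
      rw [h2] at hpt
      calc _ ≤ t ^ (-(1/2:ℝ)) * ∫ y in Iic (0:ℝ), Real.exp (-(M*t)⁻¹ * (y + a*t)^2) := hpt
        _ ≤ t ^ (-(1/2:ℝ)) * (Real.sqrt (π*M) * Real.sqrt t) :=
            mul_le_mul_of_nonneg_left hG htpos
        _ = Real.sqrt (π*M) := hts
    have h4 : (2:ℝ)^(-(3/2:ℝ)) ≤ (1+t)^(-(3/2:ℝ)) :=
      Real.rpow_le_rpow_of_nonpos h1t (by linarith) (by norm_num)
    have h5 : Real.sqrt (π*M) * 2^((3/2:ℝ)) * 2^(-(3/2:ℝ)) = Real.sqrt (π*M) := by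
      rw [mul_assoc, ← Real.rpow_add two_pos]; norm_num
    have h6 : Real.sqrt (π*M) ≤ Real.sqrt (π*M) * 2^((3/2:ℝ)) * (1+t)^(-(3/2:ℝ)) :=
      calc Real.sqrt (π*M) = Real.sqrt (π*M) * 2^((3/2:ℝ)) * 2^(-(3/2:ℝ)) := h5.symm
        _ ≤ Real.sqrt (π*M) * 2^((3/2:ℝ)) * (1+t)^(-(3/2:ℝ)) :=
            mul_le_mul_of_nonneg_left h4 (by positivity)
    have e1 : 0 ≤ I * (256*M^2/a^4) * (1+t)^(-(3/2:ℝ)) := by positivity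
    have e2 : 0 ≤ Real.sqrt (π*M) * m^(-(3/2:ℝ)) * (1+t)^(-(3/2:ℝ)) := by positivity
    linarith [h3, h6, e1, e2, hptnn]
  · -- large time
    have ht1 : (1:ℝ) ≤ t := htgt.le
    have key : ∀ y : ℝ,
        t ^ (-(1/2:ℝ)) * Real.exp (-(M*t)⁻¹ * (y + a*t)^2) * (1 + |y|) ^ (-(3/2:ℝ))
        ≤ t ^ (-(1/2:ℝ)) * Real.exp (-(a^2/(4*M)*t)) * (1 + |y|) ^ (-(3/2:ℝ))
          + t ^ (-(1/2:ℝ)) * (1 + a*t/2) ^ (-(3/2:ℝ)) * Real.exp (-(M*t)⁻¹ * (y + a*t)^2) := by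
      intro y
      rcases le_or_gt (|y|) (a*t/2) with hy | hy
      · have hy1 : a*t/2 ≤ y + a*t := by
          have := neg_abs_le y; linarith
        have hsq : (a*t/2)^2 ≤ (y + a*t)^2 := by nlinarith [mul_pos ha ht]
        have harg : a^2/(4*M)*t ≤ (M*t)⁻¹ * (y + a*t)^2 := by
          have h0 : a^2/(4*M)*t = (M*t)⁻¹ * (a*t/2)^2 := by
            field_simp; ring
          rw [h0]
          exact mul_le_mul_of_nonneg_left hsq (by positivity)
        have hexp : Real.exp (-(M*t)⁻¹ * (y + a*t)^2) ≤ Real.exp (-(a^2/(4*M)*t)) :=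
          Real.exp_le_exp.mpr (by linarith)
        have hle1 : t ^ (-(1/2:ℝ)) * Real.exp (-(M*t)⁻¹ * (y + a*t)^2) * (1 + |y|) ^ (-(3/2:ℝ))
            ≤ t ^ (-(1/2:ℝ)) * Real.exp (-(a^2/(4*M)*t)) * (1 + |y|) ^ (-(3/2:ℝ)) :=
          mul_le_mul_of_nonneg_right (mul_le_mul_of_nonneg_left hexp htpos)
            (Real.rpow_nonneg (by positivity) _)
        have hnn : 0 ≤ t ^ (-(1/2:ℝ)) * (1 + a*t/2) ^ (-(3/2:ℝ))
            * Real.exp (-(M*t)⁻¹ * (y + a*t)^2) := by positivity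
        linarith
      · have hh : (1 + |y|) ^ (-(3/2:ℝ)) ≤ (1 + a*t/2) ^ (-(3/2:ℝ)) :=
          Real.rpow_le_rpow_of_nonpos (by positivity) (by linarith) (by norm_num)
        have hle1 : t ^ (-(1/2:ℝ)) * Real.exp (-(M*t)⁻¹ * (y + a*t)^2) * (1 + |y|) ^ (-(3/2:ℝ))
            ≤ t ^ (-(1/2:ℝ)) * (1 + a*t/2) ^ (-(3/2:ℝ)) * Real.exp (-(M*t)⁻¹ * (y + a*t)^2) := by
          rw [show t ^ (-(1/2:ℝ)) * (1 + a*t/2) ^ (-(3/2:ℝ)) * Real.exp (-(M*t)⁻¹ * (y + a*t)^2)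
              = t ^ (-(1/2:ℝ)) * Real.exp (-(M*t)⁻¹ * (y + a*t)^2) * (1 + a*t/2) ^ (-(3/2:ℝ)) by
                ring]
          exact mul_le_mul_of_nonneg_left hh (by positivity)
        have hnn : 0 ≤ t ^ (-(1/2:ℝ)) * Real.exp (-(a^2/(4*M)*t)) * (1 + |y|) ^ (-(3/2:ℝ)) := by
          positivity
        linarith
    have hint1 : IntegrableOn
        (fun y : ℝ => t ^ (-(1/2:ℝ)) * Real.exp (-(a^2/(4*M)*t)) * (1 + |y|) ^ (-(3/2:ℝ)))
        (Iic 0) :=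
      (jap_int.const_mul _).integrableOn
    have hint2 : IntegrableOn
        (fun y : ℝ => t ^ (-(1/2:ℝ)) * (1 + a*t/2) ^ (-(3/2:ℝ))
          * Real.exp (-(M*t)⁻¹ * (y + a*t)^2)) (Iic 0) :=
      (hGint.const_mul _).integrableOn
    have hmono : (∫ y in Iic (0:ℝ),
          t ^ (-(1/2:ℝ)) * Real.exp (-(M*t)⁻¹ * (y + a*t)^2) * (1 + |y|) ^ (-(3/2:ℝ)))
        ≤ ∫ y in Iic (0:ℝ),
            (t ^ (-(1/2:ℝ)) * Real.exp (-(a^2/(4*M)*t)) * (1 + |y|) ^ (-(3/2:ℝ))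
              + t ^ (-(1/2:ℝ)) * (1 + a*t/2) ^ (-(3/2:ℝ))
                * Real.exp (-(M*t)⁻¹ * (y + a*t)^2)) :=
      integral_mono_of_nonneg (ae_of_all _ fun y => by positivity) (hint1.add hint2)
        (ae_of_all _ key)
    rw [integral_add hint1 hint2, integral_const_mul, integral_const_mul] at hmono
    have hIic : (∫ y in Iic (0:ℝ), (1 + |y|) ^ (-(3/2:ℝ))) ≤ I :=
      setIntegral_le_integral jap_int (ae_of_all _ fun y => by positivity)
    have hIicnn : 0 ≤ ∫ y in Iic (0:ℝ), (1 + |y|) ^ (-(3/2:ℝ)) :=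
      integral_nonneg fun y => Real.rpow_nonneg (by positivity) _
    have hhalf : t ^ (-(1/2:ℝ)) ≤ 1 :=
      Real.rpow_le_one_of_one_le_of_nonpos ht1 (by norm_num)
    have hdecay := exp_decay a M t ha hM ht1
    -- bound first term
    have hT1 : t ^ (-(1/2:ℝ)) * Real.exp (-(a^2/(4*M)*t))
          * ∫ y in Iic (0:ℝ), (1 + |y|) ^ (-(3/2:ℝ))
        ≤ I * (256*M^2/a^4) * (1+t)^(-(3/2:ℝ)) := by
      calc t ^ (-(1/2:ℝ)) * Real.exp (-(a^2/(4*M)*t))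
            * ∫ y in Iic (0:ℝ), (1 + |y|) ^ (-(3/2:ℝ))
          ≤ t ^ (-(1/2:ℝ)) * Real.exp (-(a^2/(4*M)*t)) * I :=
            mul_le_mul_of_nonneg_left hIic (by positivity)
        _ ≤ 1 * Real.exp (-(a^2/(4*M)*t)) * I :=
            mul_le_mul_of_nonneg_right
              (mul_le_mul_of_nonneg_right hhalf (Real.exp_pos _).le) hI0
        _ = Real.exp (-(a^2/(4*M)*t)) * I := by ring
        _ ≤ ((256*M^2/a^4) * (1+t)^(-(3/2:ℝ))) * I :=
            mul_le_mul_of_nonneg_right hdecay hI0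
        _ = I * (256*M^2/a^4) * (1+t)^(-(3/2:ℝ)) := by ring
    -- bound second term
    have hmin : (1 + a*t/2) ^ (-(3/2:ℝ)) ≤ m ^ (-(3/2:ℝ)) * (1+t) ^ (-(3/2:ℝ)) := by
      have hle : m * (1+t) ≤ 1 + a*t/2 := by
        have h1 := min_le_left 1 (a/2)
        have h2 := min_le_right 1 (a/2)
        have h3 : m * t ≤ (a/2) * t := mul_le_mul_of_nonneg_right h2 ht.le
        linarith
      have h := Real.rpow_le_rpow_of_nonpos (by positivity : (0:ℝ) < m * (1+t)) hle
        (by norm_num : -(3/2:ℝ) ≤ 0)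
      rwa [Real.mul_rpow hm0.le (by linarith)] at h
    have hT2 : t ^ (-(1/2:ℝ)) * (1 + a*t/2) ^ (-(3/2:ℝ))
          * ∫ y in Iic (0:ℝ), Real.exp (-(M*t)⁻¹ * (y + a*t)^2)
        ≤ Real.sqrt (π*M) * m ^ (-(3/2:ℝ)) * (1+t)^(-(3/2:ℝ)) := by
      have hGnn : 0 ≤ ∫ y in Iic (0:ℝ), Real.exp (-(M*t)⁻¹ * (y + a*t)^2) :=
        integral_nonneg fun y => (Real.exp_pos _).le
      calc t ^ (-(1/2:ℝ)) * (1 + a*t/2) ^ (-(3/2:ℝ))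
            * ∫ y in Iic (0:ℝ), Real.exp (-(M*t)⁻¹ * (y + a*t)^2)
          = (1 + a*t/2) ^ (-(3/2:ℝ))
            * (t ^ (-(1/2:ℝ)) * ∫ y in Iic (0:ℝ), Real.exp (-(M*t)⁻¹ * (y + a*t)^2)) := by
            ring
        _ ≤ (1 + a*t/2) ^ (-(3/2:ℝ)) * (t ^ (-(1/2:ℝ)) * (Real.sqrt (π*M) * Real.sqrt t)) :=
            mul_le_mul_of_nonneg_left (mul_le_mul_of_nonneg_left hG htpos)
              (Real.rpow_nonneg (by positivity) _)
        _ = (1 + a*t/2) ^ (-(3/2:ℝ)) * Real.sqrt (π*M) := by rw [hts]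
        _ ≤ (m ^ (-(3/2:ℝ)) * (1+t) ^ (-(3/2:ℝ))) * Real.sqrt (π*M) :=
            mul_le_mul_of_nonneg_right hmin (Real.sqrt_nonneg _)
        _ = Real.sqrt (π*M) * m ^ (-(3/2:ℝ)) * (1+t)^(-(3/2:ℝ)) := by ring
    have e1 : 0 ≤ Real.sqrt (π*M) * 2^((3/2:ℝ)) * (1+t)^(-(3/2:ℝ)) := by positivity
    linarith [hmono, hT1, hT2, e1, hptnn]
end

section
/- Let a > 0 and M > 0. There exists a constant C > 0 such that for all t > 0: ∫_{−∞}^0 errfn( (−y − at)/(M√t) ) (1+|y|)^{−3/2} dy ≤ C (1+t)^{−1/2}. -/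
open MeasureTheory Set

noncomputable def errfn (z : ℝ) : ℝ :=
  (1 / (2 * Real.pi)) * ∫ ξ in Set.Iic z, Real.exp (-ξ^2)

/-! ### Auxiliary lemmas -/

private lemma gauss1_int : Integrable (fun ξ : ℝ => Real.exp (-ξ^2)) := by
  simpa using integrable_exp_neg_mul_sq (b := 1) one_pos

private lemma gauss2_int : Integrable (fun ξ : ℝ => Real.exp (-(1/2) * ξ^2)) :=
  integrable_exp_neg_mul_sq (by norm_num)

/-- The constant bounding `errfn`. -/
noncomputable def errK : ℝ := (1 / (2 * Real.pi)) * Real.sqrt (2 * Real.pi)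

lemma errK_pos : 0 < errK := by
  apply mul_pos
  · positivity
  · exact Real.sqrt_pos.mpr (by positivity)

lemma gauss2_integral : (∫ ξ : ℝ, Real.exp (-(1/2) * ξ^2)) = Real.sqrt (2 * Real.pi) := by
  rw [integral_gaussian, show Real.pi / (1/2:ℝ) = 2 * Real.pi by ring]

lemma errfn_nonneg (z : ℝ) : 0 ≤ errfn z := by
  apply mul_nonneg
  · positivity
  · exact setIntegral_nonneg measurableSet_Iic fun x _ => (Real.exp_pos _).le

lemma errfn_le (z : ℝ) : errfn z ≤ errK := by
  unfold errfn errK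
  rw [← gauss2_integral]
  apply mul_le_mul_of_nonneg_left _ (by positivity)
  calc (∫ ξ in Set.Iic z, Real.exp (-ξ^2))
      ≤ ∫ ξ : ℝ, Real.exp (-ξ^2) :=
        setIntegral_le_integral gauss1_int (Filter.Eventually.of_forall fun x => (Real.exp_pos _).le)
    _ ≤ ∫ ξ : ℝ, Real.exp (-(1/2) * ξ^2) := by
        apply integral_mono gauss1_int gauss2_int
        intro x
        apply Real.exp_le_exp.mpr
        nlinarith [sq_nonneg x]

lemma errfn_mono : Monotone errfn := by
  intro z₁ z₂ h
  apply mul_le_mul_of_nonneg_left _ (by positivity)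
  exact setIntegral_mono_set gauss1_int.integrableOn
    (Filter.Eventually.of_forall fun x => (Real.exp_pos _).le)
    (HasSubset.Subset.eventuallyLE (Iic_subset_Iic.mpr h))

lemma errfn_neg_bound {z : ℝ} (hz : z ≤ 0) : errfn z ≤ errK * Real.exp (-(z^2/2)) := by
  unfold errfn errK
  have h1 : (∫ ξ in Set.Iic z, Real.exp (-ξ^2))
      ≤ ∫ ξ in Set.Iic z, Real.exp (-(z^2/2)) * Real.exp (-(1/2) * ξ^2) := by
    apply setIntegral_mono_on gauss1_int.integrableOn
      ((gauss2_int.integrableOn).const_mul _) measurableSet_Iic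
    intro x hx
    rw [← Real.exp_add]
    apply Real.exp_le_exp.mpr
    have hx' : x ≤ z := hx
    nlinarith [sq_nonneg (x - z), sq_nonneg (x + z)]
  have h2 : (∫ ξ in Set.Iic z, Real.exp (-(z^2/2)) * Real.exp (-(1/2) * ξ^2))
      = Real.exp (-(z^2/2)) * ∫ ξ in Set.Iic z, Real.exp (-(1/2) * ξ^2) := by
    rw [integral_const_mul]
  have h3 : (∫ ξ in Set.Iic z, Real.exp (-(1/2) * ξ^2))
      ≤ Real.sqrt (2 * Real.pi) := by
    rw [← gauss2_integral]
    exact setIntegral_le_integral gauss2_int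
      (Filter.Eventually.of_forall fun x => (Real.exp_pos _).le)
  calc (1 / (2 * Real.pi)) * ∫ ξ in Set.Iic z, Real.exp (-ξ^2)
      ≤ (1 / (2 * Real.pi)) * (Real.exp (-(z^2/2)) * Real.sqrt (2 * Real.pi)) := by
        apply mul_le_mul_of_nonneg_left _ (by positivity)
        exact (h1.trans_eq h2).trans (mul_le_mul_of_nonneg_left h3 (Real.exp_pos _).le)
    _ = (1 / (2 * Real.pi)) * Real.sqrt (2 * Real.pi) * Real.exp (-(z^2/2)) := by ring

private lemma integral_Ioi_comp_add (c d : ℝ) (g : ℝ → ℝ) :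
    (∫ x in Ioi c, g (x + d)) = ∫ u in Ioi (c + d), g u := by
  have mp : MeasurePreserving (fun x : ℝ => x + d) volume volume :=
    measurePreserving_add_right volume d
  have me : MeasurableEmbedding (fun x : ℝ => x + d) :=
    (Homeomorph.addRight d).measurableEmbedding
  have h := mp.setIntegral_preimage_emb me g (Ioi (c + d))
  rw [preimage_add_const_Ioi] at h
  simpa using h

private lemma integrableOn_Ioi_comp_add {c d : ℝ} {g : ℝ → ℝ}
    (hg : IntegrableOn g (Ioi (c + d))) :
    IntegrableOn (fun x => g (x + d)) (Ioi c) := by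
  have mp : MeasurePreserving (fun x : ℝ => x + d) volume volume :=
    measurePreserving_add_right volume d
  have me : MeasurableEmbedding (fun x : ℝ => x + d) :=
    (Homeomorph.addRight d).measurableEmbedding
  have h := (mp.integrableOn_comp_preimage me (f := g) (s := Ioi (c + d))).mpr hg
  rw [preimage_add_const_Ioi] at h
  simpa [Function.comp_def] using h

/-- The weight function. -/
noncomputable def wgt (y : ℝ) : ℝ := (1 + |y|) ^ (-(3/2:ℝ))

private lemma f0_int {s : ℝ} (hs : 0 ≤ s) :
    IntegrableOn (fun x : ℝ => (1 + x) ^ (-(3/2:ℝ))) (Ioi s) := by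
  have h : IntegrableOn (fun u : ℝ => u ^ (-(3/2:ℝ))) (Ioi (s + 1)) :=
    integrableOn_Ioi_rpow_of_lt (by norm_num) (by linarith)
  have := integrableOn_Ioi_comp_add (c := s) (d := 1) h
  simpa [add_comm] using this

private lemma wgt_eq_on {s : ℝ} (hs : 0 ≤ s) :
    ∀ y ∈ Iic (-s), wgt y = (fun x : ℝ => (1 + x) ^ (-(3/2:ℝ))) (-y) := by
  intro y hy
  have hy' : y ≤ 0 := le_trans hy (by linarith)
  simp only [wgt, abs_of_nonpos hy']

private lemma wgt_int_Iic {s : ℝ} (hs : 0 ≤ s) :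
    IntegrableOn wgt (Iic (-s)) := by
  apply IntegrableOn.congr_fun _ (fun y hy => (wgt_eq_on hs y hy).symm) measurableSet_Iic
  -- integrability of fun y => (1 + (-y))^p on Iic (-s)
  have h : IntegrableOn (fun x : ℝ => (1 + x) ^ (-(3/2:ℝ))) (Ioi s) := f0_int hs
  have := (MeasurePreserving.integrableOn_comp_preimage
    (Measure.measurePreserving_neg (volume : Measure ℝ))
    (Homeomorph.neg ℝ).measurableEmbedding (f := fun x : ℝ => (1 + x) ^ (-(3/2:ℝ)))
    (s := Ioi s)).mpr h
  simp only [Function.comp_def, neg_preimage, neg_Ioi] at this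
  exact (integrableOn_Iic_iff_integrableOn_Iio (hb := by simp)).mpr this

private lemma wgt_integral {s : ℝ} (hs : 0 ≤ s) :
    (∫ y in Iic (-s), wgt y) = 2 * (1 + s) ^ (-(1/2:ℝ)) := by
  have h1 : (∫ y in Iic (-s), wgt y)
      = ∫ y in Iic (-s), (fun x : ℝ => (1 + x) ^ (-(3/2:ℝ))) (-y) :=
    setIntegral_congr_fun measurableSet_Iic (wgt_eq_on hs)
  rw [h1, integral_comp_neg_Iic (-s) (fun x : ℝ => (1 + x) ^ (-(3/2:ℝ))), neg_neg]
  have h2 : (∫ x in Ioi s, (1 + x) ^ (-(3/2:ℝ)))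
      = ∫ x in Ioi s, (fun u : ℝ => u ^ (-(3/2:ℝ))) (x + 1) := by
    apply setIntegral_congr_fun measurableSet_Ioi
    intro x _
    simp [add_comm]
  rw [h2, integral_Ioi_comp_add s 1 (fun u : ℝ => u ^ (-(3/2:ℝ)))]
  rw [integral_Ioi_rpow_of_lt (by norm_num) (by linarith)]
  have : (-(3/2:ℝ)) + 1 = -(1/2:ℝ) := by norm_num
  rw [this]
  rw [add_comm s 1]
  ring

lemma wgt_nonneg (y : ℝ) : 0 ≤ wgt y := Real.rpow_nonneg (by positivity) _

theorem errfn_tail_estimate (a M : ℝ) (ha : 0 < a) (hM : 0 < M) :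
    ∃ C > 0, ∀ t : ℝ, 0 < t →
      (∫ y in Set.Iic (0:ℝ),
          errfn ((-y - a*t) / (M * Real.sqrt t)) * (1 + |y|) ^ (-(3/2:ℝ))) ≤
        C * (1 + t) ^ (-(1/2:ℝ)) := by
  set m₁ : ℝ := min 1 (a/2) with hm₁def
  set c₂ : ℝ := a^2 / (8 * M^2) with hc₂def
  set m₂ : ℝ := min 1 c₂ with hm₂def
  have hm₁ : 0 < m₁ := lt_min one_pos (by positivity)
  have hc₂ : 0 < c₂ := by positivity
  have hm₂ : 0 < m₂ := lt_min one_pos hc₂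
  have hK := errK_pos
  refine ⟨2 * errK * m₁ ^ (-(1/2:ℝ)) + 2 * errK / m₂,
    add_pos (mul_pos (mul_pos two_pos hK) (Real.rpow_pos_of_pos hm₁ _))
      (div_pos (mul_pos two_pos hK) hm₂), ?_⟩
  intro t ht
  set s : ℝ := a * t / 2 with hsdef
  have hs : 0 ≤ s := by positivity
  have hMt : 0 < M * Real.sqrt t := by positivity
  have hanti : Antitone (fun y : ℝ => errfn ((-y - a*t) / (M * Real.sqrt t))) := by
    intro y₁ y₂ hy
    exact errfn_mono (div_le_div_of_nonneg_right (by linarith) hMt.le)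
  have hwgt_cont : Continuous wgt := by
    apply Continuous.rpow_const (continuous_const.add continuous_abs)
    intro y
    left
    exact (by positivity : (0:ℝ) < 1 + |y|).ne'
  have hw0 : IntegrableOn wgt (Iic (0:ℝ)) := by
    simpa using wgt_int_Iic (s := 0) le_rfl
  have hwc : IntegrableOn wgt (Iic (-s)) := wgt_int_Iic hs
  have hfm : AEStronglyMeasurable
      (fun y : ℝ => errfn ((-y - a*t) / (M * Real.sqrt t)) * wgt y)
      (volume.restrict (Iic 0)) :=
    ((hanti.measurable.aestronglyMeasurable).mul
      hwgt_cont.measurable.aestronglyMeasurable).restrict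
  have hfi : IntegrableOn
      (fun y : ℝ => errfn ((-y - a*t) / (M * Real.sqrt t)) * wgt y) (Iic 0) := by
    apply Integrable.mono (hw0.const_mul errK) hfm
    filter_upwards with y
    rw [Real.norm_eq_abs, Real.norm_eq_abs,
      abs_of_nonneg (mul_nonneg (errfn_nonneg _) (wgt_nonneg y)),
      abs_of_nonneg (mul_nonneg hK.le (wgt_nonneg y))]
    exact mul_le_mul_of_nonneg_right (errfn_le _) (wgt_nonneg y)
  set g : ℝ → ℝ := fun y =>
    errK * (Iic (-s)).indicator wgt y + (errK * Real.exp (-(c₂ * t))) * wgt y with hgdef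
  have hgi1 : IntegrableOn (fun y => errK * (Iic (-s)).indicator wgt y) (Iic 0) :=
    (hw0.indicator measurableSet_Iic).const_mul errK
  have hgi2 : IntegrableOn (fun y => (errK * Real.exp (-(c₂ * t))) * wgt y) (Iic 0) :=
    hw0.const_mul _
  have hgi : IntegrableOn g (Iic 0) := hgi1.add hgi2
  have hle : ∀ y ∈ Iic (0:ℝ),
      errfn ((-y - a*t) / (M * Real.sqrt t)) * wgt y ≤ g y := by
    intro y hy
    by_cases hcase : y ≤ -s
    · have h1 : errfn ((-y - a*t) / (M * Real.sqrt t)) * wgt y ≤ errK * wgt y :=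
        mul_le_mul_of_nonneg_right (errfn_le _) (wgt_nonneg y)
      have h2 : 0 ≤ (errK * Real.exp (-(c₂ * t))) * wgt y :=
        mul_nonneg (mul_nonneg hK.le (Real.exp_pos _).le) (wgt_nonneg y)
      have h3 : (Iic (-s)).indicator wgt y = wgt y :=
        indicator_of_mem (show y ∈ Iic (-s) from hcase) wgt
      simp only [hgdef, h3]
      linarith
    · push_neg at hcase
      have hy0 : y ≤ 0 := hy
      have hst : Real.sqrt t * Real.sqrt t = t := Real.mul_self_sqrt ht.le
      have hz1 : (-y - a*t) / (M * Real.sqrt t) ≤ -((a/(2*M)) * Real.sqrt t) := by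
        rw [div_le_iff₀ hMt]
        have key : -((a/(2*M)) * Real.sqrt t) * (M * Real.sqrt t) = -(a*t/2) := by
          have e1 : -((a/(2*M)) * Real.sqrt t) * (M * Real.sqrt t)
              = -((a/(2*M)) * M) * (Real.sqrt t * Real.sqrt t) := by ring
          rw [e1, hst]
          field_simp
        rw [key]
        simp only [hsdef] at hcase
        linarith
      have hb : 0 ≤ (a/(2*M)) * Real.sqrt t := by positivity
      have hz0 : (-y - a*t) / (M * Real.sqrt t) ≤ 0 := hz1.trans (by linarith)
      have hsq : c₂ * t ≤ ((-y - a*t) / (M * Real.sqrt t))^2 / 2 := by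
        have h4 : ((a/(2*M)) * Real.sqrt t)^2 ≤ ((-y - a*t) / (M * Real.sqrt t))^2 := by
          nlinarith [hz1, hb]
        have h5 : ((a/(2*M)) * Real.sqrt t)^2 = a^2/(4*M^2) * t := by
          rw [mul_pow, pow_two (Real.sqrt t), hst]
          ring
        rw [h5] at h4
        have h6' : a^2/(4*M^2) * t = 2 * (c₂ * t) := by rw [hc₂def]; ring
        linarith
      have h6 : errfn ((-y - a*t) / (M * Real.sqrt t))
          ≤ errK * Real.exp (-(((-y - a*t) / (M * Real.sqrt t))^2 / 2)) :=
        errfn_neg_bound hz0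
      have h7 : Real.exp (-(((-y - a*t) / (M * Real.sqrt t))^2 / 2))
          ≤ Real.exp (-(c₂ * t)) := Real.exp_le_exp.mpr (by linarith)
      have h8 : errfn ((-y - a*t) / (M * Real.sqrt t)) * wgt y
          ≤ (errK * Real.exp (-(c₂ * t))) * wgt y := by
        apply mul_le_mul_of_nonneg_right _ (wgt_nonneg y)
        exact h6.trans (mul_le_mul_of_nonneg_left h7 hK.le)
      have h9 : 0 ≤ errK * (Iic (-s)).indicator wgt y :=
        mul_nonneg hK.le (indicator_nonneg (fun x _ => wgt_nonneg x) y)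
      simp only [hgdef]
      linarith
  have hmain : (∫ y in Iic (0:ℝ), errfn ((-y - a*t) / (M * Real.sqrt t)) * wgt y)
      ≤ ∫ y in Iic (0:ℝ), g y :=
    setIntegral_mono_on hfi hgi measurableSet_Iic hle
  have hind : (∫ y in Iic (0:ℝ), (Iic (-s)).indicator wgt y) = ∫ y in Iic (-s), wgt y := by
    rw [integral_indicator measurableSet_Iic, Measure.restrict_restrict measurableSet_Iic,
      inter_eq_left.mpr (Iic_subset_Iic.mpr (by linarith))]
  have hg_eq : (∫ y in Iic (0:ℝ), g y)
      = errK * (2 * (1 + s) ^ (-(1/2:ℝ))) + (errK * Real.exp (-(c₂ * t))) * 2 := by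
    simp only [hgdef]
    rw [integral_add hgi1 hgi2, integral_const_mul, integral_const_mul, hind,
      wgt_integral hs]
    have h0 : (∫ y in Iic (-(0:ℝ)), wgt y) = 2 * (1 + (0:ℝ)) ^ (-(1/2:ℝ)) :=
      wgt_integral le_rfl
    rw [neg_zero] at h0
    rw [h0]
    norm_num
  -- final numeric estimates
  have hA : (1 + s) ^ (-(1/2:ℝ)) ≤ m₁ ^ (-(1/2:ℝ)) * (1 + t) ^ (-(1/2:ℝ)) := by
    have hmle : m₁ * (1 + t) ≤ 1 + s := by
      have h1 : m₁ ≤ 1 := min_le_left _ _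
      have h2 : m₁ ≤ a/2 := min_le_right _ _
      have : m₁ * (1 + t) = m₁ + m₁ * t := by ring
      rw [this, hsdef]
      have : m₁ * t ≤ (a/2) * t := mul_le_mul_of_nonneg_right h2 ht.le
      nlinarith
    calc (1 + s) ^ (-(1/2:ℝ)) ≤ (m₁ * (1 + t)) ^ (-(1/2:ℝ)) :=
          Real.rpow_le_rpow_of_nonpos (by positivity) hmle (by norm_num)
      _ = m₁ ^ (-(1/2:ℝ)) * (1 + t) ^ (-(1/2:ℝ)) :=
          Real.mul_rpow hm₁.le (by linarith)
  have hB : Real.exp (-(c₂ * t)) ≤ m₂⁻¹ * (1 + t) ^ (-(1/2:ℝ)) := by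
    have hexp : m₂ * (1 + t) ≤ Real.exp (c₂ * t) := by
      have h1 : m₂ ≤ 1 := min_le_left _ _
      have h2 : m₂ ≤ c₂ := min_le_right _ _
      have h3 : 1 + c₂ * t ≤ Real.exp (c₂ * t) := by
        have := Real.add_one_le_exp (c₂ * t)
        linarith
      have : m₂ * t ≤ c₂ * t := mul_le_mul_of_nonneg_right h2 ht.le
      nlinarith
    have hstep : Real.exp (-(c₂ * t)) ≤ (m₂ * (1 + t))⁻¹ := by
      rw [Real.exp_neg]
      exact inv_anti₀ (by positivity) hexp
    calc Real.exp (-(c₂ * t)) ≤ (m₂ * (1 + t))⁻¹ := hstep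
      _ = m₂⁻¹ * (1 + t)⁻¹ := by rw [mul_inv]
      _ = m₂⁻¹ * (1 + t) ^ (-(1:ℝ)) := by rw [Real.rpow_neg_one]
      _ ≤ m₂⁻¹ * (1 + t) ^ (-(1/2:ℝ)) := by
          apply mul_le_mul_of_nonneg_left _ (by positivity)
          exact Real.rpow_le_rpow_of_exponent_le (by linarith) (by norm_num)
  have hpos1 : (0:ℝ) ≤ (1 + t) ^ (-(1/2:ℝ)) := by positivity
  calc (∫ y in Set.Iic (0:ℝ),
          errfn ((-y - a*t) / (M * Real.sqrt t)) * (1 + |y|) ^ (-(3/2:ℝ)))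
      = ∫ y in Iic (0:ℝ), errfn ((-y - a*t) / (M * Real.sqrt t)) * wgt y := rfl
    _ ≤ ∫ y in Iic (0:ℝ), g y := hmain
    _ = errK * (2 * (1 + s) ^ (-(1/2:ℝ))) + (errK * Real.exp (-(c₂ * t))) * 2 := hg_eq
    _ ≤ errK * (2 * (m₁ ^ (-(1/2:ℝ)) * (1 + t) ^ (-(1/2:ℝ))))
        + (errK * (m₂⁻¹ * (1 + t) ^ (-(1/2:ℝ)))) * 2 := by
        apply add_le_add
        · apply mul_le_mul_of_nonneg_left _ hK.le
          exact mul_le_mul_of_nonneg_left hA (by norm_num)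
        · apply mul_le_mul_of_nonneg_right _ (by norm_num)
          exact mul_le_mul_of_nonneg_left hB hK.le
    _ = (2 * errK * m₁ ^ (-(1/2:ℝ)) + 2 * errK / m₂) * (1 + t) ^ (-(1/2:ℝ)) := by
        field_simp
end

section
/- Let M > 0 and η > 0. There exist constants C, η₁, η₂ > 0 such that for all y ≤ 0, all w ∈ ℝ, and all τ > 0: e^{−(w−y)²/(Mτ)} · e^{−η|y|} ≤ C ( e^{−w²/(4Mτ)} · e^{−η|y|} + e^{−(w−y)²/(Mτ)} · e^{−η₁|y|} · e^{−η₂|w|} ). -/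
theorem gaussian_localization_split (M η : ℝ) (hM : 0 < M) (hη : 0 < η) :
    ∃ C > 0, ∃ η₁ > 0, ∃ η₂ > 0, ∀ y : ℝ, y ≤ 0 → ∀ w : ℝ, ∀ τ : ℝ, 0 < τ →
      Real.exp (-(w - y)^2 / (M*τ)) * Real.exp (-η * |y|) ≤
        C * (Real.exp (-w^2 / (4*M*τ)) * Real.exp (-η * |y|) +
          Real.exp (-(w - y)^2 / (M*τ)) * Real.exp (-η₁ * |y|) *
            Real.exp (-η₂ * |w|)) := by
  refine ⟨1, one_pos, η/2, by positivity, η/4, by positivity, ?_⟩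
  intro y hy w τ hτ
  have hMτ : 0 < M * τ := by positivity
  rw [one_mul]
  rcases le_or_gt (|w|) (2 * |y|) with h | h
  · have h2 : Real.exp (-(w - y)^2 / (M*τ)) * Real.exp (-η * |y|) ≤
        Real.exp (-(w - y)^2 / (M*τ)) * Real.exp (-(η/2) * |y|) * Real.exp (-(η/4) * |w|) := by
      rw [mul_assoc, ← Real.exp_add, ← Real.exp_add, ← Real.exp_add]
      apply Real.exp_le_exp.2
      nlinarith [abs_nonneg y, abs_nonneg w]
    have h1 : 0 ≤ Real.exp (-w^2 / (4*M*τ)) * Real.exp (-η * |y|) := by positivity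
    linarith
  · have hsq : w^2 / 4 ≤ (w - y)^2 := by
      nlinarith [abs_sub_abs_le_abs_sub w y, sq_abs (w - y), sq_abs w, sq_abs y,
        abs_nonneg w, abs_nonneg y, abs_nonneg (w - y)]
    have h1 : Real.exp (-(w - y)^2 / (M*τ)) ≤ Real.exp (-w^2 / (4*M*τ)) := by
      apply Real.exp_le_exp.2
      rw [div_le_div_iff₀ hMτ (by positivity)]
      nlinarith
    have h2 : 0 ≤ Real.exp (-(w - y)^2 / (M*τ)) * Real.exp (-(η/2) * |y|) *
        Real.exp (-(η/4) * |w|) := by positivity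
    have h3 : Real.exp (-(w - y)^2 / (M*τ)) * Real.exp (-η * |y|) ≤
        Real.exp (-w^2 / (4*M*τ)) * Real.exp (-η * |y|) := by
      gcongr
    linarith
end

section
/- Let a < 0 and η > 0. There exist constants C, η₁, η₂ > 0 such that for all y ≤ 0 and all s ≥ 0: e^{−η|y|} · (1+|y−as|)^{−1} ≤ C ( e^{−η₁|y|} · e^{−η₂ s} + e^{−η|y|} · (1+s)^{−1} ). -/
theorem localized_algebraic_split (a η : ℝ) (ha : a < 0) (hη : 0 < η) :
    ∃ C > 0, ∃ η₁ > 0, ∃ η₂ > 0, ∀ y : ℝ, y ≤ 0 → ∀ s : ℝ, 0 ≤ s →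
      Real.exp (-η * |y|) * (1 + |y - a*s|)⁻¹ ≤
        C * (Real.exp (-η₁ * |y|) * Real.exp (-η₂ * s) +
          Real.exp (-η * |y|) * (1 + s)⁻¹) := by
  have hb : 0 < -a := by linarith
  set C : ℝ := max 1 (2 / (-a)) with hC
  have hC1 : 1 ≤ C := le_max_left _ _
  have hC2 : 2 / (-a) ≤ C := le_max_right _ _
  have hCpos : 0 < C := lt_of_lt_of_le one_pos hC1
  refine ⟨C, hCpos, η / 2, by positivity, η * (-a) / 4, by positivity, ?_⟩
  intro y hy s hs
  have habs : |y| = -y := abs_of_nonpos hy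
  by_cases hcase : (-a) * s / 2 ≤ |y|
  · -- exponential term dominates
    have h1 : (1 + |y - a * s|)⁻¹ ≤ 1 := by
      rw [inv_le_one_iff₀]
      right
      have := abs_nonneg (y - a * s)
      linarith
    have h2 : Real.exp (-η * |y|) * (1 + |y - a * s|)⁻¹ ≤ Real.exp (-η * |y|) := by
      nlinarith [Real.exp_pos (-η * |y|), inv_nonneg.mpr (by positivity : (0:ℝ) ≤ 1 + |y - a*s|)]
    have h3 : Real.exp (-η * |y|) = Real.exp (-(η/2) * |y|) * Real.exp (-(η/2) * |y|) := by
      rw [← Real.exp_add]; ring_nf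
    have h4 : Real.exp (-(η/2) * |y|) ≤ Real.exp (-(η * (-a) / 4) * s) := by
      apply Real.exp_le_exp.mpr
      nlinarith
    have h5 : Real.exp (-η * |y|) ≤ Real.exp (-(η/2) * |y|) * Real.exp (-(η * (-a) / 4) * s) := by
      rw [h3]
      exact mul_le_mul_of_nonneg_left h4 (Real.exp_pos _).le
    have hpos2 : 0 ≤ Real.exp (-η * |y|) * (1 + s)⁻¹ := by positivity
    calc Real.exp (-η * |y|) * (1 + |y - a*s|)⁻¹
        ≤ Real.exp (-(η/2) * |y|) * Real.exp (-(η * (-a) / 4) * s) := le_trans h2 h5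
      _ ≤ C * (Real.exp (-(η/2) * |y|) * Real.exp (-(η * (-a) / 4) * s)
            + Real.exp (-η * |y|) * (1 + s)⁻¹) := by
          nlinarith [Real.exp_pos (-(η/2) * |y|), Real.exp_pos (-(η * (-a) / 4) * s)]
      _ = C * (Real.exp (-(η/2) * |y|) * Real.exp (-(η * (-a) / 4) * s)
            + Real.exp (-η * |y|) * (1 + s)⁻¹) := rfl
  · push_neg at hcase
    -- |y| < (-a) s / 2, so y - a s ≥ (-a) s / 2 ≥ 0
    have hya : y - a * s = y + (-a) * s := by ring
    have hylb : -y < (-a) * s / 2 := by rw [← habs]; exact hcase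
    have hge : (-a) * s / 2 ≤ y - a * s := by linarith
    have hnn : 0 ≤ y - a * s := le_trans (by positivity) hge
    have habs2 : |y - a * s| = y - a * s := abs_of_nonneg hnn
    have key : (1 + |y - a * s|)⁻¹ ≤ C * (1 + s)⁻¹ := by
      rw [habs2]
      have h1s : (0:ℝ) < 1 + s := by linarith
      have h1t : (0:ℝ) < 1 + (y - a * s) := by linarith
      rw [inv_le_iff_one_le_mul₀ h1t]
      have hCs : 1 + s ≤ C * (1 + (y - a * s)) := by
        have hc2 : s ≤ (2 / (-a)) * ((-a) * s / 2) := by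
          rw [div_mul_eq_mul_div]
          rw [le_div_iff₀ hb]
          ring_nf
          linarith
        have : (2 / (-a)) * ((-a) * s / 2) ≤ C * (y - a * s) := by
          apply mul_le_mul hC2 hge (by positivity) hCpos.le
        nlinarith
      calc (1:ℝ) = (1 + s) * (1 + s)⁻¹ := by field_simp
        _ ≤ (C * (1 + (y - a * s))) * (1 + s)⁻¹ := by
            apply mul_le_mul_of_nonneg_right hCs (by positivity)
        _ = C * (1 + s)⁻¹ * (1 + (y - a * s)) := by ring
    have hE := Real.exp_pos (-η * |y|)
    have hterm : 0 ≤ C * (Real.exp (-(η/2) * |y|) * Real.exp (-(η * (-a) / 4) * s)) := by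
      positivity
    calc Real.exp (-η * |y|) * (1 + |y - a*s|)⁻¹
        ≤ Real.exp (-η * |y|) * (C * (1 + s)⁻¹) :=
          mul_le_mul_of_nonneg_left key hE.le
      _ = C * (Real.exp (-η * |y|) * (1 + s)⁻¹) := by ring
      _ ≤ C * (Real.exp (-(η/2) * |y|) * Real.exp (-(η * (-a) / 4) * s)
            + Real.exp (-η * |y|) * (1 + s)⁻¹) := by nlinarith [Real.exp_pos (-(η/2) * |y|), Real.exp_pos (-(η * (-a) / 4) * s)]
end

section
/- Let a > 0, M > 0, and η > 0. There exists a constant C > 0 such that for all t > 0: ∫₀^t ∫_{−∞}^0 (t−s)^{−1/2} e^{−(y+a(t−s))²/(M(t−s))} · e^{−η|y|} · (1+s)^{−3/2} dy ds ≤ C (1+t)^{−3/2}. -/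
open MeasureTheory Set

private lemma inv_le_mul_inv_aux {u v M : ℝ} (hu : 0 < u) (hv : 0 < v) (h : v ≤ M * u) :
    u⁻¹ ≤ M * v⁻¹ := by
  have hM : 0 < M := by nlinarith
  rw [show M * v⁻¹ = M / v from (div_eq_mul_inv M v).symm, le_div_iff₀ hv]
  calc u⁻¹ * v ≤ u⁻¹ * (M * u) := mul_le_mul_of_nonneg_left h (by positivity)
    _ = M := by field_simp

private lemma exp_integrableOn_Iic {k : ℝ} (hk : 0 < k) :
    IntegrableOn (fun y : ℝ => Real.exp (k * y)) (Iic (0:ℝ)) := by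
  have h1 : Integrable ((Ioi (0:ℝ)).indicator fun u => Real.exp (-k * u)) :=
    (integrable_indicator_iff measurableSet_Ioi).2 (exp_neg_integrableOn_Ioi 0 hk)
  have h2 := h1.comp_neg
  have h3 : (fun y : ℝ => ((Ioi (0:ℝ)).indicator fun u => Real.exp (-k * u)) (-y))
      = (Iio (0:ℝ)).indicator fun y => Real.exp (k * y) := by
    funext y
    by_cases hy : y < 0
    · have hm1 : (-y) ∈ Ioi (0:ℝ) := by simpa using hy
      have hm2 : y ∈ Iio (0:ℝ) := hy
      simp only [Set.indicator_of_mem hm1, Set.indicator_of_mem hm2, neg_mul_neg]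
    · have hm1 : (-y) ∉ Ioi (0:ℝ) := by simpa using hy
      have hm2 : y ∉ Iio (0:ℝ) := hy
      simp only [Set.indicator_of_notMem hm1, Set.indicator_of_notMem hm2]
  rw [h3] at h2
  have h4 : IntegrableOn (fun y : ℝ => Real.exp (k * y)) (Iio (0:ℝ)) :=
    (integrable_indicator_iff measurableSet_Iio).1 h2
  exact h4.congr_set_ae Iio_ae_eq_Iic.symm

set_option maxHeartbeats 1600000 in
theorem overcompressive_excited_estimate (a M η : ℝ)
    (ha : 0 < a) (hM : 0 < M) (hη : 0 < η) :
    ∃ C > 0, ∀ t : ℝ, 0 < t →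
      (∫ s in Set.Ioo (0:ℝ) t, ∫ y in Set.Iic (0:ℝ),
          (t - s) ^ (-(1/2:ℝ)) * Real.exp (-(y + a*(t-s))^2 / (M*(t-s))) *
            Real.exp (-η * |y|) * (1 + s) ^ (-(3/2:ℝ))) ≤
        C * (1 + t) ^ (-(3/2:ℝ)) := by
  set c : ℝ := min (η*a/4) (a^2/(4*M)) with hc_def
  have hc : 0 < c := lt_min (by positivity) (by positivity)
  have hc1 : c ≤ η*a/4 := min_le_left _ _
  have hc2 : c ≤ a^2/(4*M) := min_le_right _ _
  set l : ℝ := min 1 (c/3) with hl_def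
  have hl : 0 < l := lt_min one_pos (by positivity)
  have hl1 : l ≤ 1 := min_le_left _ _
  have hl2 : l ≤ c/3 := min_le_right _ _
  set K : ℝ := l ^ (-(3/2):ℝ) with hK_def
  have hK : 0 < K := Real.rpow_pos_of_pos hl _
  set E : ℝ := ∫ y in Iic (0:ℝ), Real.exp (η/2 * y) with hE_def
  have hE : 0 ≤ E := setIntegral_nonneg measurableSet_Iic fun y _ => (Real.exp_pos _).le
  set φ : ℝ → ℝ := fun u => u ^ (-(1/2:ℝ)) * Real.exp (-(c/2) * u) with hφ_def
  set J : ℝ := ∫ u in Ioi (0:ℝ), φ u with hJ_def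
  have hφint : IntegrableOn φ (Ioi (0:ℝ)) := by
    have h := integrableOn_rpow_mul_exp_neg_mul_rpow (s := -(1/2:ℝ)) (p := 1) (b := c/2)
      (by norm_num) one_pos (by positivity)
    exact h.congr_fun (fun x hx => by beta_reduce; rw [Real.rpow_one]) measurableSet_Ioi
  have hJ : 0 ≤ J := setIntegral_nonneg measurableSet_Ioi fun u hu =>
    mul_nonneg (Real.rpow_nonneg (le_of_lt hu) _) (Real.exp_pos _).le
  have hEexp : IntegrableOn (fun y : ℝ => Real.exp (η/2 * y)) (Iic (0:ℝ)) :=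
    exp_integrableOn_Iic (by positivity)
  refine ⟨K*E*J + 1, by positivity, ?_⟩
  intro t ht
  have htp : (0:ℝ) < (1+t) ^ (-(3/2):ℝ) := Real.rpow_pos_of_pos (by linarith) _
  set D : ℝ := K * (1+t) ^ (-(3/2):ℝ) * E with hD_def
  have hD : 0 ≤ D := by positivity
  set ψ : ℝ → ℝ := fun s => φ (t - s) with hψ_def
  -- integrability of ψ on Ioo 0 t
  have hφt : IntervalIntegrable φ volume 0 t :=
    (intervalIntegrable_iff_integrableOn_Ioo_of_le ht.le).2 (hφint.mono_set Ioo_subset_Ioi_self)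
  have hψt : IntervalIntegrable ψ volume 0 t := by
    have := (hφt.comp_sub_left t).symm
    simpa [hψ_def] using this
  have hψint : IntegrableOn ψ (Ioo (0:ℝ) t) :=
    (intervalIntegrable_iff_integrableOn_Ioo_of_le ht.le).1 hψt
  -- value bound for ∫ ψ
  have hψJ : ∫ s in Ioo (0:ℝ) t, ψ s ≤ J := by
    have h1 : ∫ s in Ioo (0:ℝ) t, ψ s = ∫ u in Ioc (0:ℝ) t, φ u := by
      rw [← integral_Ioc_eq_integral_Ioo, ← intervalIntegral.integral_of_le ht.le]
      rw [show (∫ s in (0:ℝ)..t, ψ s) = ∫ s in (0:ℝ)..t, φ (t - s) from rfl]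
      rw [intervalIntegral.integral_comp_sub_left φ t, sub_self, sub_zero,
        intervalIntegral.integral_of_le ht.le]
    rw [h1]
    refine setIntegral_mono_set hφint ?_ (HasSubset.Subset.eventuallyLE Ioc_subset_Ioi_self)
    refine ae_restrict_of_forall_mem measurableSet_Ioi fun u hu => ?_
    exact mul_nonneg (Real.rpow_nonneg (le_of_lt hu) _) (Real.exp_pos _).le
  -- pointwise bound
  have hpt : ∀ s ∈ Ioo (0:ℝ) t, ∀ y ∈ Iic (0:ℝ),
      (t - s) ^ (-(1/2:ℝ)) * Real.exp (-(y + a*(t-s))^2 / (M*(t-s))) *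
        Real.exp (-η * |y|) * (1 + s) ^ (-(3/2:ℝ)) ≤
      (K * (1+t) ^ (-(3/2):ℝ) * ψ s) * Real.exp (η/2 * y) := by
    intro s hs y hy
    obtain ⟨hs0, hst⟩ := hs
    have hτ : 0 < t - s := by linarith
    have hy0 : y ≤ 0 := hy
    have hT : (0:ℝ) ≤ (t - s) ^ (-(1/2:ℝ)) := Real.rpow_nonneg hτ.le _
    have hS : (0:ℝ) ≤ (1 + s) ^ (-(3/2):ℝ) := Real.rpow_nonneg (by linarith) _
    have hX : (0:ℝ) ≤ Real.exp (η/2 * y) := (Real.exp_pos _).le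
    -- P1
    have P1 : Real.exp (-(y + a*(t-s))^2 / (M*(t-s))) * Real.exp (-η * |y|) ≤
        Real.exp (-(c*(t-s))) * Real.exp (η/2 * y) := by
      rw [← Real.exp_add, ← Real.exp_add, Real.exp_le_exp, abs_of_nonpos hy0]
      have hMτ : 0 < M * (t - s) := by positivity
      rcases le_or_gt y (-(a*(t-s))/2) with h | h
      · have hA : -(y + a*(t-s))^2 / (M*(t-s)) ≤ 0 := by
          rw [neg_div]
          exact neg_nonpos.2 (div_nonneg (sq_nonneg _) hMτ.le)
        have hky : η/2 * y ≤ -(c*(t-s)) := by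
          have h1 : η/2 * y ≤ η/2 * (-(a*(t-s))/2) :=
            mul_le_mul_of_nonneg_left h (by positivity)
          have h2 : c * (t-s) ≤ (η*a/4) * (t-s) := mul_le_mul_of_nonneg_right hc1 hτ.le
          nlinarith
        nlinarith
      · have h1 : a*(t-s)/2 ≤ y + a*(t-s) := by linarith
        have h2 : (a*(t-s)/2)^2 ≤ (y + a*(t-s))^2 :=
          pow_le_pow_left₀ (by positivity) h1 2
        have h3 : (a*(t-s)/2)^2 / (M*(t-s)) ≤ (y + a*(t-s))^2 / (M*(t-s)) :=
          (div_le_div_iff_of_pos_right hMτ).2 h2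
        have h4 : (a*(t-s)/2)^2 / (M*(t-s)) = (a^2/(4*M)) * (t-s) := by
          field_simp
          ring
        have h5 : c * (t-s) ≤ (a^2/(4*M)) * (t-s) := mul_le_mul_of_nonneg_right hc2 hτ.le
        have h6 : η/2 * y ≤ 0 := mul_nonpos_of_nonneg_of_nonpos (by positivity) hy0
        rw [neg_div]
        nlinarith
    -- P2
    have P2 : Real.exp (-(c*(t-s))) * (1 + s) ^ (-(3/2):ℝ) ≤
        K * (1+t) ^ (-(3/2):ℝ) * Real.exp (-(c/2) * (t-s)) := by
      have hu : (0:ℝ) < (1 + s) ^ (3/2:ℝ) := Real.rpow_pos_of_pos (by linarith) _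
      have hv : (0:ℝ) < (1 + t) ^ (3/2:ℝ) := Real.rpow_pos_of_pos (by linarith) _
      have hq1 : 1 + t ≤ (1+s) * (1+(t-s)) := by nlinarith
      have hq2 : (1+t) ^ (3/2:ℝ) ≤ (1+s) ^ (3/2:ℝ) * (1+(t-s)) ^ (3/2:ℝ) := by
        rw [← Real.mul_rpow (by linarith) (by linarith)]
        exact Real.rpow_le_rpow (by linarith) hq1 (by norm_num)
      have hq3 : (1+(t-s)) ^ (3/2:ℝ) ≤ K * Real.exp ((c/2) * (t-s)) := by
        have h51 := Real.add_one_le_exp (l * (t-s))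
        have h52 : l * (1+(t-s)) ≤ Real.exp (l * (t-s)) := by nlinarith
        have h5 : 1 + (t-s) ≤ l⁻¹ * Real.exp (l * (t-s)) := by
          calc 1 + (t-s) = l⁻¹ * (l * (1+(t-s))) := by field_simp
            _ ≤ l⁻¹ * Real.exp (l * (t-s)) := mul_le_mul_of_nonneg_left h52 (by positivity)
        calc (1+(t-s)) ^ (3/2:ℝ) ≤ (l⁻¹ * Real.exp (l * (t-s))) ^ (3/2:ℝ) :=
              Real.rpow_le_rpow (by linarith) h5 (by norm_num)
          _ = l ^ (-(3/2):ℝ) * Real.exp (l * (t-s) * (3/2)) := by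
              rw [Real.mul_rpow (by positivity) (Real.exp_pos _).le,
                Real.rpow_neg hl.le, ← Real.inv_rpow hl.le,
                Real.rpow_def_of_pos (Real.exp_pos _), Real.log_exp]
          _ ≤ K * Real.exp ((c/2) * (t-s)) := by
              rw [hK_def]
              refine mul_le_mul_of_nonneg_left (Real.exp_le_exp.2 ?_) hK.le
              nlinarith
      have hq4 : (1+t) ^ (3/2:ℝ) ≤
          (K * Real.exp ((c/2) * (t-s))) * ((1+s) ^ (3/2:ℝ)) := by
        calc (1+t) ^ (3/2:ℝ) ≤ (1+s) ^ (3/2:ℝ) * (1+(t-s)) ^ (3/2:ℝ) := hq2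
          _ ≤ (1+s) ^ (3/2:ℝ) * (K * Real.exp ((c/2) * (t-s))) :=
              mul_le_mul_of_nonneg_left hq3 hu.le
          _ = (K * Real.exp ((c/2) * (t-s))) * ((1+s) ^ (3/2:ℝ)) := by ring
      have h9 : ((1+s) ^ (3/2:ℝ))⁻¹ ≤
          (K * Real.exp ((c/2) * (t-s))) * ((1+t) ^ (3/2:ℝ))⁻¹ :=
        inv_le_mul_inv_aux hu hv hq4
      have h10 : Real.exp (-(c*(t-s))) * ((1+s) ^ (3/2:ℝ))⁻¹ ≤
          Real.exp (-(c*(t-s))) * ((K * Real.exp ((c/2) * (t-s))) * ((1+t) ^ (3/2:ℝ))⁻¹) :=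
        mul_le_mul_of_nonneg_left h9 (Real.exp_pos _).le
      have h11 : Real.exp (-(c*(t-s))) * ((K * Real.exp ((c/2) * (t-s))) * ((1+t) ^ (3/2:ℝ))⁻¹)
          = K * ((1+t) ^ (3/2:ℝ))⁻¹ * Real.exp (-(c/2) * (t-s)) := by
        rw [show Real.exp (-(c*(t-s))) * ((K * Real.exp ((c/2) * (t-s))) * ((1+t) ^ (3/2:ℝ))⁻¹)
            = K * ((1+t) ^ (3/2:ℝ))⁻¹ * (Real.exp (-(c*(t-s))) * Real.exp ((c/2) * (t-s)))
          from by ring, ← Real.exp_add]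
        ring_nf
      rw [Real.rpow_neg (by linarith : (0:ℝ) ≤ 1 + s), Real.rpow_neg (by linarith : (0:ℝ) ≤ 1 + t)]
      calc Real.exp (-(c*(t-s))) * ((1+s) ^ (3/2:ℝ))⁻¹
          ≤ Real.exp (-(c*(t-s))) * ((K * Real.exp ((c/2) * (t-s))) * ((1+t) ^ (3/2:ℝ))⁻¹) := h10
        _ = K * ((1+t) ^ (3/2:ℝ))⁻¹ * Real.exp (-(c/2) * (t-s)) := h11
    -- combine
    calc (t - s) ^ (-(1/2:ℝ)) * Real.exp (-(y + a*(t-s))^2 / (M*(t-s))) *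
          Real.exp (-η * |y|) * (1 + s) ^ (-(3/2):ℝ)
        = (t - s) ^ (-(1/2:ℝ)) * (Real.exp (-(y + a*(t-s))^2 / (M*(t-s))) *
            Real.exp (-η * |y|)) * (1 + s) ^ (-(3/2):ℝ) := by ring
      _ ≤ (t - s) ^ (-(1/2:ℝ)) * (Real.exp (-(c*(t-s))) * Real.exp (η/2 * y)) *
            (1 + s) ^ (-(3/2):ℝ) :=
          mul_le_mul_of_nonneg_right (mul_le_mul_of_nonneg_left P1 hT) hS
      _ = ((t - s) ^ (-(1/2:ℝ)) * Real.exp (η/2 * y)) *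
            (Real.exp (-(c*(t-s))) * (1 + s) ^ (-(3/2):ℝ)) := by ring
      _ ≤ ((t - s) ^ (-(1/2:ℝ)) * Real.exp (η/2 * y)) *
            (K * (1+t) ^ (-(3/2):ℝ) * Real.exp (-(c/2) * (t-s))) :=
          mul_le_mul_of_nonneg_left P2 (mul_nonneg hT hX)
      _ = (K * (1+t) ^ (-(3/2):ℝ) * ψ s) * Real.exp (η/2 * y) := by
          simp only [hψ_def, hφ_def]
          ring
  -- inner integral bound
  have hinner : ∀ s ∈ Ioo (0:ℝ) t,
      (∫ y in Iic (0:ℝ), (t - s) ^ (-(1/2:ℝ)) * Real.exp (-(y + a*(t-s))^2 / (M*(t-s))) *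
          Real.exp (-η * |y|) * (1 + s) ^ (-(3/2):ℝ)) ≤ D * ψ s := by
    intro s hs
    obtain ⟨hs0, hst⟩ := hs
    have hτ : 0 < t - s := by linarith
    have h0 : (0 : ℝ → ℝ) ≤ᵐ[volume.restrict (Iic (0:ℝ))]
        fun y => (t - s) ^ (-(1/2:ℝ)) * Real.exp (-(y + a*(t-s))^2 / (M*(t-s))) *
          Real.exp (-η * |y|) * (1 + s) ^ (-(3/2):ℝ) := by
      refine Filter.Eventually.of_forall fun y => ?_
      have hT : (0:ℝ) ≤ (t - s) ^ (-(1/2:ℝ)) := Real.rpow_nonneg hτ.le _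
      have hS : (0:ℝ) ≤ (1 + s) ^ (-(3/2):ℝ) := Real.rpow_nonneg (by linarith) _
      positivity
    have hgi : Integrable (fun y => (K * (1+t) ^ (-(3/2):ℝ) * ψ s) * Real.exp (η/2 * y))
        (volume.restrict (Iic (0:ℝ))) := hEexp.const_mul _
    have hle : (fun y => (t - s) ^ (-(1/2:ℝ)) * Real.exp (-(y + a*(t-s))^2 / (M*(t-s))) *
          Real.exp (-η * |y|) * (1 + s) ^ (-(3/2):ℝ)) ≤ᵐ[volume.restrict (Iic (0:ℝ))]
        fun y => (K * (1+t) ^ (-(3/2):ℝ) * ψ s) * Real.exp (η/2 * y) :=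
      ae_restrict_of_forall_mem measurableSet_Iic fun y hy => hpt s ⟨hs0, hst⟩ y hy
    calc (∫ y in Iic (0:ℝ), (t - s) ^ (-(1/2:ℝ)) * Real.exp (-(y + a*(t-s))^2 / (M*(t-s))) *
          Real.exp (-η * |y|) * (1 + s) ^ (-(3/2):ℝ))
        ≤ ∫ y in Iic (0:ℝ), (K * (1+t) ^ (-(3/2):ℝ) * ψ s) * Real.exp (η/2 * y) :=
          integral_mono_of_nonneg h0 hgi hle
      _ = (K * (1+t) ^ (-(3/2):ℝ) * ψ s) * E := by rw [integral_const_mul]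
      _ = D * ψ s := by rw [hD_def]; ring
  -- outer bound
  have houter : (∫ s in Set.Ioo (0:ℝ) t, ∫ y in Set.Iic (0:ℝ),
      (t - s) ^ (-(1/2:ℝ)) * Real.exp (-(y + a*(t-s))^2 / (M*(t-s))) *
        Real.exp (-η * |y|) * (1 + s) ^ (-(3/2):ℝ)) ≤
      ∫ s in Ioo (0:ℝ) t, D * ψ s := by
    refine integral_mono_of_nonneg ?_ (hψint.const_mul D) ?_
    · refine ae_restrict_of_forall_mem measurableSet_Ioo fun s hs => ?_
      obtain ⟨hs0, hst⟩ := hs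
      have hτ : 0 < t - s := by linarith
      refine setIntegral_nonneg measurableSet_Iic fun y _ => ?_
      have hT : (0:ℝ) ≤ (t - s) ^ (-(1/2:ℝ)) := Real.rpow_nonneg hτ.le _
      have hS : (0:ℝ) ≤ (1 + s) ^ (-(3/2):ℝ) := Real.rpow_nonneg (by linarith) _
      positivity
    · exact ae_restrict_of_forall_mem measurableSet_Ioo fun s hs => hinner s hs
  calc (∫ s in Set.Ioo (0:ℝ) t, ∫ y in Set.Iic (0:ℝ),
      (t - s) ^ (-(1/2:ℝ)) * Real.exp (-(y + a*(t-s))^2 / (M*(t-s))) *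
        Real.exp (-η * |y|) * (1 + s) ^ (-(3/2):ℝ))
      ≤ ∫ s in Ioo (0:ℝ) t, D * ψ s := houter
    _ = D * ∫ s in Ioo (0:ℝ) t, ψ s := integral_const_mul D _
    _ ≤ D * J := mul_le_mul_of_nonneg_left hψJ hD
    _ = K * E * J * (1 + t) ^ (-(3/2):ℝ) := by rw [hD_def]; ring
    _ ≤ (K * E * J + 1) * (1 + t) ^ (-(3/2):ℝ) := by nlinarith
end

section
/- Let a > 0, M > 0, and η > 0. There exists a constant C > 0 such that for all t > 0: ∫₀^t ∫_{−∞}^0 errfn( (−y − a(t−s))/(M√(t−s)) ) · e^{−η|y|} · (1+s)^{−3/2} dy ds ≤ C (1+t)^{−3/2}. -/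
open MeasureTheory Set

namespace ErrfnAux

lemma gauss1 : Integrable (fun ξ : ℝ => Real.exp (-ξ^2)) := by
  simpa using integrable_exp_neg_mul_sq one_pos

lemma gauss2 : Integrable (fun ξ : ℝ => Real.exp (-(1/2)*ξ^2)) :=
  integrable_exp_neg_mul_sq (by norm_num)

lemma errfn_nonneg (z : ℝ) : 0 ≤ errfn z := by
  have := Real.pi_pos
  exact mul_nonneg (by positivity)
    (setIntegral_nonneg measurableSet_Iic fun ξ _ => (Real.exp_pos _).le)

lemma errfn_le (z : ℝ) : errfn z ≤ Real.sqrt (2*Real.pi) / (2*Real.pi) := by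
  have hpi := Real.pi_pos
  have h1 : (∫ ξ in Set.Iic z, Real.exp (-ξ^2)) ≤ ∫ ξ : ℝ, Real.exp (-ξ^2) :=
    setIntegral_le_integral gauss1 (Filter.Eventually.of_forall fun ξ => (Real.exp_pos _).le)
  have h2 : (∫ ξ : ℝ, Real.exp (-ξ^2)) = Real.sqrt Real.pi := by
    simpa using integral_gaussian 1
  have h3 : Real.sqrt Real.pi ≤ Real.sqrt (2*Real.pi) :=
    Real.sqrt_le_sqrt (by linarith)
  calc errfn z = (1/(2*Real.pi)) * ∫ ξ in Set.Iic z, Real.exp (-ξ^2) := rfl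
    _ ≤ (1/(2*Real.pi)) * Real.sqrt (2*Real.pi) := by
        apply mul_le_mul_of_nonneg_left _ (by positivity)
        rw [h2] at h1; linarith
    _ = Real.sqrt (2*Real.pi) / (2*Real.pi) := by ring

lemma errfn_le_exp {z : ℝ} (hz : z ≤ 0) :
    errfn z ≤ Real.sqrt (2*Real.pi) / (2*Real.pi) * Real.exp (-z^2/2) := by
  have hpi := Real.pi_pos
  have hmono : (∫ ξ in Set.Iic z, Real.exp (-ξ^2))
      ≤ ∫ ξ in Set.Iic z, Real.exp (-z^2/2) * Real.exp (-(1/2)*ξ^2) := by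
    apply setIntegral_mono_on gauss1.integrableOn
      ((gauss2.const_mul _).integrableOn) measurableSet_Iic
    intro ξ hξ
    rw [← Real.exp_add]
    apply Real.exp_le_exp.mpr
    have h1 : ξ ≤ z := hξ
    nlinarith
  have hval : (∫ ξ : ℝ, Real.exp (-(1/2)*ξ^2)) = Real.sqrt (2*Real.pi) := by
    rw [integral_gaussian]
    congr 1; ring
  have h2 : (∫ ξ in Set.Iic z, Real.exp (-(1/2)*ξ^2)) ≤ Real.sqrt (2*Real.pi) := by
    rw [← hval]
    exact setIntegral_le_integral gauss2
      (Filter.Eventually.of_forall fun ξ => (Real.exp_pos _).le)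
  have h3 : (∫ ξ in Set.Iic z, Real.exp (-z^2/2) * Real.exp (-(1/2)*ξ^2))
      = Real.exp (-z^2/2) * ∫ ξ in Set.Iic z, Real.exp (-(1/2)*ξ^2) :=
    integral_const_mul _ _
  calc errfn z = (1/(2*Real.pi)) * ∫ ξ in Set.Iic z, Real.exp (-ξ^2) := rfl
    _ ≤ (1/(2*Real.pi)) * (Real.exp (-z^2/2) * Real.sqrt (2*Real.pi)) := by
        apply mul_le_mul_of_nonneg_left _ (by positivity)
        rw [h3] at hmono
        calc (∫ ξ in Set.Iic z, Real.exp (-ξ^2))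
            ≤ Real.exp (-z^2/2) * ∫ ξ in Set.Iic z, Real.exp (-(1/2)*ξ^2) := hmono
          _ ≤ Real.exp (-z^2/2) * Real.sqrt (2*Real.pi) :=
              mul_le_mul_of_nonneg_left h2 (Real.exp_pos _).le
    _ = Real.sqrt (2*Real.pi) / (2*Real.pi) * Real.exp (-z^2/2) := by ring

lemma exp_mul_integrableOn_Iic {b : ℝ} (hb : 0 < b) :
    IntegrableOn (fun y : ℝ => Real.exp (b*y)) (Set.Iic (0:ℝ)) := by
  have h1 : IntegrableOn (fun x : ℝ => Real.exp (-b*x)) (Set.Ici (0:ℝ)) :=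
    (integrableOn_Ici_iff_integrableOn_Ioi).mpr (exp_neg_integrableOn_Ioi 0 hb)
  have A : MeasurableEmbedding fun x : ℝ => -x :=
    (Homeomorph.neg ℝ).isClosedEmbedding.measurableEmbedding
  have h2 := ((Measure.measurePreserving_neg (volume : Measure ℝ)).integrableOn_comp_preimage
      A (f := fun x : ℝ => Real.exp (-b*x)) (s := Set.Ici (0:ℝ))).mpr h1
  simpa [Function.comp_def, neg_mul_neg, neg_preimage, neg_Ici, neg_zero] using h2

/-- The key pointwise bound. -/
lemma key_pointwise (a M η : ℝ) (ha : 0 < a) (hM : 0 < M) (hη : 0 < η)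
    {t s y : ℝ} (hs0 : 0 < s) (hst : s < t) (hy : y ≤ 0) :
    errfn ((-y - a*(t-s)) / (M * Real.sqrt (t-s))) * Real.exp (-η * |y|)
      ≤ Real.sqrt (2*Real.pi) / (2*Real.pi) * Real.exp ((η/2)*y) *
          Real.exp (-(min (a^2/(8*M^2)) (η*a/4)) * (t-s)) := by
  have hpi := Real.pi_pos
  set K := Real.sqrt (2*Real.pi) / (2*Real.pi) with hK
  have hKpos : 0 < K := by rw [hK]; positivity
  set τ := t - s with hτdef
  have hτ : 0 < τ := by rw [hτdef]; linarith
  set c := min (a^2/(8*M^2)) (η*a/4) with hc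
  have hc1 : c ≤ a^2/(8*M^2) := min_le_left _ _
  have hc2 : c ≤ η*a/4 := min_le_right _ _
  have habs : |y| = -y := abs_of_nonpos hy
  rw [habs]
  rcases le_or_gt (a*τ/2) (-y) with hcase | hcase
  · have h1 : errfn ((-y - a*τ) / (M * Real.sqrt τ)) ≤ K := errfn_le _
    have h2 : Real.exp (-η * -y) ≤ Real.exp ((η/2)*y) * Real.exp (-c*τ) := by
      rw [← Real.exp_add]
      apply Real.exp_le_exp.mpr
      have hmy : η * (a*τ/2) ≤ η * (-y) := mul_le_mul_of_nonneg_left hcase hη.le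
      have hcτ : c*τ ≤ (η*a/4)*τ := mul_le_mul_of_nonneg_right hc2 hτ.le
      nlinarith
    calc errfn ((-y - a*τ) / (M * Real.sqrt τ)) * Real.exp (-η * -y)
        ≤ K * (Real.exp ((η/2)*y) * Real.exp (-c*τ)) :=
          mul_le_mul h1 h2 (Real.exp_pos _).le hKpos.le
      _ = K * Real.exp ((η/2)*y) * Real.exp (-c*τ) := by ring
  · have hsq : 0 < Real.sqrt τ := Real.sqrt_pos.mpr hτ
    have hMs : 0 < M * Real.sqrt τ := by positivity
    set z := (-y - a*τ) / (M * Real.sqrt τ) with hz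
    have hznum : -y - a*τ ≤ -(a*τ/2) := by linarith
    have hzle : z ≤ -(a*τ/2) / (M * Real.sqrt τ) := by
      rw [hz]; gcongr
    have hwpos : 0 < (a*τ/2) / (M * Real.sqrt τ) := by positivity
    have hzneg : z ≤ 0 := by
      refine hzle.trans ?_
      rw [neg_div]
      linarith
    have hwle : (a*τ/2) / (M * Real.sqrt τ) ≤ -z := by
      rw [neg_div] at hzle; linarith
    have hw2 : ((a*τ/2) / (M * Real.sqrt τ))^2 = a^2*τ/(4*M^2) := by
      rw [div_pow, mul_pow, Real.sq_sqrt hτ.le]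
      field_simp
      ring
    have hz2 : a^2*τ/(4*M^2) ≤ z^2 := by
      have := pow_le_pow_left₀ hwpos.le hwle 2
      rw [hw2, neg_pow] at this
      simpa using this
    have h1 : errfn z ≤ K * Real.exp (-z^2/2) := errfn_le_exp hzneg
    have h2 : Real.exp (-z^2/2) ≤ Real.exp (-c*τ) := by
      apply Real.exp_le_exp.mpr
      have hM2 : (0:ℝ) < M^2 := by positivity
      have hca : c * (8*M^2) ≤ a^2 := by
        rw [← le_div_iff₀ (by positivity : (0:ℝ) < 8*M^2)]; exact hc1
      have h1' : c * (8*M^2) * τ ≤ a^2 * τ := mul_le_mul_of_nonneg_right hca hτ.le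
      have hz2' : a^2*τ ≤ z^2 * (4*M^2) := by
        rw [div_le_iff₀ (by positivity : (0:ℝ) < 4*M^2)] at hz2; linarith
      nlinarith [h1', hz2', hM2]
    have h3 : Real.exp (-η * -y) ≤ Real.exp ((η/2)*y) := by
      apply Real.exp_le_exp.mpr
      nlinarith
    calc errfn z * Real.exp (-η * -y)
        ≤ (K * Real.exp (-z^2/2)) * Real.exp ((η/2)*y) :=
          mul_le_mul h1 h3 (Real.exp_pos _).le (by positivity)
      _ ≤ (K * Real.exp (-c*τ)) * Real.exp ((η/2)*y) := by
          have := mul_le_mul_of_nonneg_left h2 hKpos.le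
          exact mul_le_mul_of_nonneg_right this (Real.exp_pos _).le
      _ = K * Real.exp ((η/2)*y) * Real.exp (-c*τ) := by ring

end ErrfnAux

set_option maxHeartbeats 2000000 in
theorem errfn_excited_estimate (a M η : ℝ)
    (ha : 0 < a) (hM : 0 < M) (hη : 0 < η) :
    ∃ C > 0, ∀ t : ℝ, 0 < t →
      (∫ s in Set.Ioo (0:ℝ) t, ∫ y in Set.Iic (0:ℝ),
          errfn ((-y - a*(t-s)) / (M * Real.sqrt (t-s))) *
            Real.exp (-η * |y|) * (1 + s) ^ (-(3/2:ℝ))) ≤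
        C * (1 + t) ^ (-(3/2:ℝ)) := by
  classical
  have hpi := Real.pi_pos
  set K := Real.sqrt (2*Real.pi) / (2*Real.pi) with hK
  have hKpos : 0 < K := by rw [hK]; positivity
  set c := min (a^2/(8*M^2)) (η*a/4) with hc
  have hcpos : 0 < c := lt_min (by positivity) (by positivity)
  set J := ∫ y in Set.Iic (0:ℝ), Real.exp ((η/2)*y) with hJ
  have hJ0 : 0 ≤ J :=
    setIntegral_nonneg measurableSet_Iic fun y _ => (Real.exp_pos _).le
  set m := max 1 (8/c) with hm
  have hm1 : (1:ℝ) ≤ m := le_max_left _ _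
  have hm2 : 8/c ≤ m := le_max_right _ _
  set D := m^2 with hD
  have hD0 : (0:ℝ) ≤ D := by rw [hD]; positivity
  have htwo : (0:ℝ) < 2^((3/2:ℝ)) := Real.rpow_pos_of_pos two_pos _
  have hC0 : 0 ≤ K*J*(2^((3/2:ℝ)) * (1/c) + D*2) := by
    apply mul_nonneg (mul_nonneg hKpos.le hJ0)
    have : 0 ≤ 2^((3/2:ℝ)) * (1/c) := by positivity
    nlinarith
  refine ⟨K*J*(2^((3/2:ℝ)) * (1/c) + D*2) + 1, by linarith, ?_⟩
  intro t ht
  have h1t : (0:ℝ) < 1 + t := by linarith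
  have hpt : 0 < (1+t)^(-(3/2:ℝ)) := Real.rpow_pos_of_pos h1t _
  set A := K*J*2^((3/2:ℝ))*(1+t)^(-(3/2:ℝ)) with hA
  set B := K*J*D*(1+t)^(-(3/2:ℝ)) with hB
  have hA0 : 0 ≤ A := by
    rw [hA]
    exact mul_nonneg (mul_nonneg (mul_nonneg hKpos.le hJ0) htwo.le) hpt.le
  have hB0 : 0 ≤ B := by
    rw [hB]
    exact mul_nonneg (mul_nonneg (mul_nonneg hKpos.le hJ0) hD0) hpt.le
  -- the scalar splitting bound
  have hsplit : ∀ s ∈ Set.Ioo (0:ℝ) t,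
      K*Real.exp (-c*(t-s))*(1+s)^(-(3/2:ℝ))*J
        ≤ A*Real.exp (-c*(t-s)) + B*(1+s)^(-(3/2:ℝ)) := by
    intro s hs
    obtain ⟨hs0, hst⟩ := hs
    have h1s : (0:ℝ) < 1 + s := by linarith
    have hps : 0 < (1+s)^(-(3/2:ℝ)) := Real.rpow_pos_of_pos h1s _
    have hexp0 : 0 < Real.exp (-c*(t-s)) := Real.exp_pos _
    have hKJ : 0 ≤ K*J := mul_nonneg hKpos.le hJ0
    rcases le_or_gt (t/2) s with hhalf | hhalf
    · -- use (1+s)^{-3/2} ≤ 2^{3/2}(1+t)^{-3/2}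
      have hbase : (1+t)/2 ≤ 1+s := by linarith
      have hb2 : (0:ℝ) < (1+t)/2 := by linarith
      have h2 : (1+s)^(-(3/2:ℝ)) ≤ ((1+t)/2)^(-(3/2:ℝ)) :=
        Real.rpow_le_rpow_of_nonpos hb2 hbase (by norm_num)
      have h3 : ((1+t)/2)^(-(3/2:ℝ)) = 2^((3/2:ℝ)) * (1+t)^(-(3/2:ℝ)) := by
        rw [Real.div_rpow h1t.le (by norm_num : (0:ℝ) ≤ 2),
          Real.rpow_neg (by norm_num : (0:ℝ) ≤ 2), div_eq_mul_inv, inv_inv]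
        ring
      have h4 : K*Real.exp (-c*(t-s))*(1+s)^(-(3/2:ℝ))*J ≤ A*Real.exp (-c*(t-s)) := by
        calc K*Real.exp (-c*(t-s))*(1+s)^(-(3/2:ℝ))*J
            = (K*J*Real.exp (-c*(t-s))) * (1+s)^(-(3/2:ℝ)) := by ring
          _ ≤ (K*J*Real.exp (-c*(t-s))) * (2^((3/2:ℝ)) * (1+t)^(-(3/2:ℝ))) := by
              apply mul_le_mul_of_nonneg_left _ (mul_nonneg hKJ hexp0.le)
              rw [← h3]; exact h2
          _ = A*Real.exp (-c*(t-s)) := by rw [hA]; ring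
      nlinarith [mul_nonneg hB0 hps.le]
    · -- use exp(-c(t-s)) ≤ D (1+t)^{-3/2}
      have e1 : Real.exp (-c*(t-s)) ≤ Real.exp (-(c*t/2)) := by
        apply Real.exp_le_exp.mpr
        nlinarith
      have e2 : (1+t)^((3/2:ℝ)) ≤ D * Real.exp (c*t/2) := by
        have p1 : (1+t)^((3/2:ℝ)) ≤ (1+t)^((2:ℝ)) :=
          Real.rpow_le_rpow_of_exponent_le (by linarith) (by norm_num)
        have p2 : (1+t)^((2:ℝ)) = (1+t)^2 := Real.rpow_two _
        have hcm : 8 ≤ m * c := by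
          have := mul_le_mul_of_nonneg_right hm2 hcpos.le
          rwa [div_mul_cancel₀ 8 hcpos.ne'] at this
        have p3 : 1 + t ≤ m*(1+c*t/8) := by
          nlinarith [mul_le_mul_of_nonneg_right hcm ht.le, hm1]
        have p4 : (1+t)^2 ≤ m^2*(1+c*t/8)^2 := by
          have := pow_le_pow_left₀ (by linarith : (0:ℝ) ≤ 1+t) p3 2
          rwa [mul_pow] at this
        have p5 : (1+c*t/8) ≤ Real.exp (c*t/8) := by
          linarith [Real.add_one_le_exp (c*t/8)]
        have p6 : (1+c*t/8)^2 ≤ Real.exp (c*t/8)^2 := by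
          apply pow_le_pow_left₀ (by nlinarith) p5
        have p7 : Real.exp (c*t/8)^2 = Real.exp (c*t/4) := by
          rw [sq, ← Real.exp_add]; congr 1; ring
        have p8 : Real.exp (c*t/4) ≤ Real.exp (c*t/2) := by
          apply Real.exp_le_exp.mpr
          nlinarith [mul_le_mul_of_nonneg_right hcpos.le ht.le, mul_pos hcpos ht]
        have hm20 : (0:ℝ) < m^2 := by positivity
        calc (1+t)^((3/2:ℝ)) ≤ (1+t)^2 := by rw [← p2]; exact p1
          _ ≤ m^2*(1+c*t/8)^2 := p4
          _ ≤ m^2*Real.exp (c*t/4) := by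
              have h67 : (1+c*t/8)^2 ≤ Real.exp (c*t/4) := p7 ▸ p6
              exact mul_le_mul_of_nonneg_left h67 (by positivity)
          _ ≤ D * Real.exp (c*t/2) := by
              rw [hD]
              exact mul_le_mul_of_nonneg_left p8 hm20.le
      have e3 : Real.exp (-(c*t/2)) ≤ D * (1+t)^(-(3/2:ℝ)) := by
        have hp : 0 < (1+t)^((3/2:ℝ)) := Real.rpow_pos_of_pos h1t _
        have key : Real.exp (-(c*t/2)) * (1+t)^((3/2:ℝ)) ≤ D := by
          calc Real.exp (-(c*t/2)) * (1+t)^((3/2:ℝ))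
              ≤ Real.exp (-(c*t/2)) * (D * Real.exp (c*t/2)) :=
                mul_le_mul_of_nonneg_left e2 (Real.exp_pos _).le
            _ = D * (Real.exp (-(c*t/2)) * Real.exp (c*t/2)) := by ring
            _ = D := by rw [← Real.exp_add]; norm_num
        rw [Real.rpow_neg h1t.le]
        have hrw : Real.exp (-(c*t/2))
            = (Real.exp (-(c*t/2)) * (1+t)^((3/2:ℝ))) * ((1+t)^((3/2:ℝ)))⁻¹ := by
          field_simp
        rw [hrw]
        exact mul_le_mul_of_nonneg_right key (inv_nonneg.mpr hp.le)
      have h4 : K*Real.exp (-c*(t-s))*(1+s)^(-(3/2:ℝ))*J ≤ B*(1+s)^(-(3/2:ℝ)) := by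
        calc K*Real.exp (-c*(t-s))*(1+s)^(-(3/2:ℝ))*J
            = (K*J*(1+s)^(-(3/2:ℝ))) * Real.exp (-c*(t-s)) := by ring
          _ ≤ (K*J*(1+s)^(-(3/2:ℝ))) * (D*(1+t)^(-(3/2:ℝ))) := by
              apply mul_le_mul_of_nonneg_left (e1.trans e3)
                (mul_nonneg hKJ hps.le)
          _ = B*(1+s)^(-(3/2:ℝ)) := by rw [hB]; ring
      nlinarith [mul_nonneg hA0 hexp0.le]
  -- inner integral bound
  have hinner : ∀ s ∈ Set.Ioo (0:ℝ) t,
      (∫ y in Set.Iic (0:ℝ),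
          errfn ((-y - a*(t-s)) / (M * Real.sqrt (t-s))) *
            Real.exp (-η * |y|) * (1 + s) ^ (-(3/2:ℝ)))
        ≤ K*Real.exp (-c*(t-s))*(1+s)^(-(3/2:ℝ))*J := by
    intro s hs
    obtain ⟨hs0, hst⟩ := hs
    have h1s : (0:ℝ) < 1 + s := by linarith
    have hps : 0 ≤ (1+s)^(-(3/2:ℝ)) := (Real.rpow_pos_of_pos h1s _).le
    have hIg : IntegrableOn (fun y : ℝ => Real.exp ((η/2)*y)) (Set.Iic (0:ℝ)) :=
      ErrfnAux.exp_mul_integrableOn_Iic (by positivity)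
    have hmono := integral_mono_of_nonneg (μ := volume.restrict (Set.Iic (0:ℝ)))
      (f := fun y => errfn ((-y - a*(t-s)) / (M * Real.sqrt (t-s))) *
            Real.exp (-η * |y|) * (1 + s) ^ (-(3/2:ℝ)))
      (g := fun y => (K*Real.exp (-c*(t-s))*(1+s)^(-(3/2:ℝ))) * Real.exp ((η/2)*y))
      (Filter.Eventually.of_forall fun y =>
        mul_nonneg (mul_nonneg (ErrfnAux.errfn_nonneg _) (Real.exp_pos _).le) hps)
      (hIg.const_mul _) ?_
    · calc (∫ y in Set.Iic (0:ℝ),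
            errfn ((-y - a*(t-s)) / (M * Real.sqrt (t-s))) *
              Real.exp (-η * |y|) * (1 + s) ^ (-(3/2:ℝ)))
          ≤ ∫ y in Set.Iic (0:ℝ),
              (K*Real.exp (-c*(t-s))*(1+s)^(-(3/2:ℝ))) * Real.exp ((η/2)*y) := hmono
        _ = (K*Real.exp (-c*(t-s))*(1+s)^(-(3/2:ℝ))) * J := by
            rw [hJ]; exact integral_const_mul _ _
        _ = K*Real.exp (-c*(t-s))*(1+s)^(-(3/2:ℝ))*J := by ring
    · filter_upwards [ae_restrict_mem measurableSet_Iic] with y hy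
      have hk := ErrfnAux.key_pointwise a M η ha hM hη hs0 hst hy
      calc errfn ((-y - a*(t-s)) / (M * Real.sqrt (t-s))) *
              Real.exp (-η * |y|) * (1 + s) ^ (-(3/2:ℝ))
          ≤ (K * Real.exp ((η/2)*y) * Real.exp (-c*(t-s))) * (1+s)^(-(3/2:ℝ)) :=
            mul_le_mul_of_nonneg_right hk hps
        _ = (K*Real.exp (-c*(t-s))*(1+s)^(-(3/2:ℝ))) * Real.exp ((η/2)*y) := by ring
  -- integrability of the outer bound
  have hG1 : IntegrableOn (fun s : ℝ => Real.exp (-c*(t-s))) (Set.Ioo (0:ℝ) t) := by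
    have hcont : Continuous (fun s : ℝ => Real.exp (-c*(t-s))) := by fun_prop
    exact (hcont.continuousOn.integrableOn_Icc).mono_set Set.Ioo_subset_Icc_self
  have hG2 : IntegrableOn (fun s : ℝ => (1+s)^(-(3/2:ℝ))) (Set.Ioo (0:ℝ) t) := by
    have hco : ContinuousOn (fun s : ℝ => (1+s)^(-(3/2:ℝ))) (Set.Icc 0 t) := by
      apply ContinuousOn.rpow_const
      · exact (continuous_const.add continuous_id).continuousOn
      · intro x hx
        exact Or.inl (ne_of_gt (by linarith [hx.1]))
    exact hco.integrableOn_Icc.mono_set Set.Ioo_subset_Icc_self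
  have hGint : IntegrableOn
      (fun s : ℝ => A*Real.exp (-c*(t-s)) + B*(1+s)^(-(3/2:ℝ))) (Set.Ioo (0:ℝ) t) :=
    (hG1.const_mul A).add (hG2.const_mul B)
  -- outer comparison
  have houter : (∫ s in Set.Ioo (0:ℝ) t, ∫ y in Set.Iic (0:ℝ),
        errfn ((-y - a*(t-s)) / (M * Real.sqrt (t-s))) *
          Real.exp (-η * |y|) * (1 + s) ^ (-(3/2:ℝ)))
      ≤ ∫ s in Set.Ioo (0:ℝ) t, (A*Real.exp (-c*(t-s)) + B*(1+s)^(-(3/2:ℝ))) := by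
    refine integral_mono_of_nonneg ?_ hGint ?_
    · filter_upwards [ae_restrict_mem measurableSet_Ioo] with s hs
      apply setIntegral_nonneg measurableSet_Iic
      intro y _
      have h1s : 0 ≤ (1+s)^(-(3/2:ℝ)) := Real.rpow_nonneg (by linarith [hs.1]) _
      exact mul_nonneg (mul_nonneg (ErrfnAux.errfn_nonneg _) (Real.exp_pos _).le) h1s
    · filter_upwards [ae_restrict_mem measurableSet_Ioo] with s hs
      exact (hinner s hs).trans (hsplit s hs)
  -- evaluate / bound the two simple integrals
  have hIc : (∫ s in Set.Ioo (0:ℝ) t, Real.exp (-c*(t-s))) ≤ 1/c := by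
    rw [← integral_Ioc_eq_integral_Ioo, ← intervalIntegral.integral_of_le ht.le]
    have heq : (∫ s in (0:ℝ)..t, Real.exp (-c*(t-s)))
        = ∫ u in (0:ℝ)..t, Real.exp (-c*u) := by
      have h := intervalIntegral.integral_comp_sub_left (a := (0:ℝ)) (b := t)
        (fun u => Real.exp (-c*u)) t
      simpa using h
    rw [heq]
    have hderiv : ∀ x ∈ Set.uIcc (0:ℝ) t,
        HasDerivAt (fun u : ℝ => -Real.exp (-c*u)/c) (Real.exp (-c*x)) x := by
      intro x _
      have h := (((hasDerivAt_id x).const_mul (-c)).exp).neg.div_const c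
      refine h.congr_deriv ?_
      field_simp
      rfl
    have hii : IntervalIntegrable (fun u : ℝ => Real.exp (-c*u)) volume 0 t := by
      apply Continuous.intervalIntegrable; fun_prop
    rw [intervalIntegral.integral_eq_sub_of_hasDerivAt hderiv hii]
    have h1 : Real.exp (-c*(0:ℝ)) = 1 := by norm_num
    rw [h1]
    have h2 : 0 ≤ Real.exp (-c*t)/c := by positivity
    have h3 : -Real.exp (-c*t)/c = -(Real.exp (-c*t)/c) := by ring
    have h4 : (-1:ℝ)/c = -(1/c) := by ring
    rw [h3]
    nlinarith [h2, hcpos]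
  have hIp : (∫ s in Set.Ioo (0:ℝ) t, (1+s)^(-(3/2:ℝ))) ≤ 2 := by
    rw [← integral_Ioc_eq_integral_Ioo, ← intervalIntegral.integral_of_le ht.le]
    have hderiv : ∀ x ∈ Set.uIcc (0:ℝ) t,
        HasDerivAt (fun u : ℝ => -2*(1+u)^(-(1/2:ℝ))) ((1+x)^(-(3/2:ℝ))) x := by
      intro x hx
      rw [Set.uIcc_of_le ht.le] at hx
      have h1x : (0:ℝ) < 1 + x := by linarith [hx.1]
      have h := (((hasDerivAt_id x).const_add 1).rpow_const
        (p := -(1/2:ℝ)) (Or.inl h1x.ne')).const_mul (-2 : ℝ)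
      refine h.congr_deriv ?_
      simp only [id_eq]
      rw [show (-(1/2:ℝ)-1) = -(3/2:ℝ) by norm_num]
      ring
    have hii : IntervalIntegrable (fun u : ℝ => (1+u)^(-(3/2:ℝ))) volume 0 t := by
      apply ContinuousOn.intervalIntegrable
      apply ContinuousOn.rpow_const
      · exact (continuous_const.add continuous_id).continuousOn
      · intro x hx
        rw [Set.uIcc_of_le ht.le] at hx
        exact Or.inl (ne_of_gt (by linarith [hx.1]))
    rw [intervalIntegral.integral_eq_sub_of_hasDerivAt hderiv hii]
    have h0 : 0 ≤ (1+t)^(-(1/2:ℝ)) := (Real.rpow_pos_of_pos h1t _).le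
    have h1 : ((1:ℝ)+0)^(-(1/2:ℝ)) = 1 := by norm_num
    rw [h1]
    linarith
  -- assemble
  have hsum : (∫ s in Set.Ioo (0:ℝ) t,
        (A*Real.exp (-c*(t-s)) + B*(1+s)^(-(3/2:ℝ))))
      = A * (∫ s in Set.Ioo (0:ℝ) t, Real.exp (-c*(t-s)))
        + B * (∫ s in Set.Ioo (0:ℝ) t, (1+s)^(-(3/2:ℝ))) := by
    rw [integral_add (hG1.const_mul A) (hG2.const_mul B),
      integral_const_mul, integral_const_mul]
  calc (∫ s in Set.Ioo (0:ℝ) t, ∫ y in Set.Iic (0:ℝ),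
        errfn ((-y - a*(t-s)) / (M * Real.sqrt (t-s))) *
          Real.exp (-η * |y|) * (1 + s) ^ (-(3/2:ℝ)))
      ≤ ∫ s in Set.Ioo (0:ℝ) t, (A*Real.exp (-c*(t-s)) + B*(1+s)^(-(3/2:ℝ))) := houter
    _ = A * (∫ s in Set.Ioo (0:ℝ) t, Real.exp (-c*(t-s)))
        + B * (∫ s in Set.Ioo (0:ℝ) t, (1+s)^(-(3/2:ℝ))) := hsum
    _ ≤ A * (1/c) + B * 2 := by
        have i1 : 0 ≤ ∫ s in Set.Ioo (0:ℝ) t, Real.exp (-c*(t-s)) :=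
          setIntegral_nonneg measurableSet_Ioo fun s _ => (Real.exp_pos _).le
        have := mul_le_mul_of_nonneg_left hIc hA0
        have := mul_le_mul_of_nonneg_left hIp hB0
        nlinarith
    _ = (K*J*(2^((3/2:ℝ)) * (1/c) + D*2)) * (1+t)^(-(3/2:ℝ)) := by
        rw [hA, hB]; ring
    _ ≤ (K*J*(2^((3/2:ℝ)) * (1/c) + D*2) + 1) * (1+t)^(-(3/2:ℝ)) := by
        nlinarith [hpt.le]
end

section
/- Let a > 0 and β > 0. There exist constants C, M > 0 such that for all y ≤ 0 and all t > 0: | ∂_t[ errfn( (y+at)/√(4βt) ) − errfn( (y−at)/√(4βt) ) ] | ≤ C t^{−1/2} e^{−(y+at)²/(Mt)}. -/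
open MeasureTheory Set

lemma exp_neg_sq_integrable : MeasureTheory.Integrable (fun ξ : ℝ => Real.exp (-ξ^2)) := by
  have := integrable_exp_neg_mul_sq (b := 1) one_pos
  simpa using this

lemma errfn_hasDerivAt (z : ℝ) :
    HasDerivAt errfn ((1 / (2 * Real.pi)) * Real.exp (-z^2)) z := by
  have hint := exp_neg_sq_integrable
  have h1 : errfn = fun w => (1 / (2 * Real.pi)) *
      ((∫ ξ in Set.Iic (0:ℝ), Real.exp (-ξ^2)) + ∫ ξ in (0:ℝ)..w, Real.exp (-ξ^2)) := by
    funext w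
    rw [errfn, ← intervalIntegral.integral_Iic_sub_Iic hint.integrableOn hint.integrableOn]
    ring
  have hcont : Continuous (fun ξ : ℝ => Real.exp (-ξ^2)) := by continuity
  have hd : HasDerivAt (fun w => ∫ ξ in (0:ℝ)..w, Real.exp (-ξ^2)) (Real.exp (-z^2)) z :=
    intervalIntegral.integral_hasDerivAt_right (hint.intervalIntegrable)
      hcont.stronglyMeasurable.stronglyMeasurableAtFilter hcont.continuousAt
  rw [h1]
  simpa using (hd.const_add _).const_mul (1 / (2 * Real.pi))

lemma g_hasDerivAt (c y β t : ℝ) (hβ : 0 < β) (ht : 0 < t) :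
    HasDerivAt (fun τ : ℝ => (y + c*τ) / Real.sqrt (4*β*τ))
      ((c*t - y) / (2 * t * Real.sqrt (4*β*t))) t := by
  have h4βt : (0:ℝ) < 4*β*t := by positivity
  have hs : 0 < Real.sqrt (4*β*t) := Real.sqrt_pos.2 h4βt
  have hs2 : Real.sqrt (4*β*t) ^ 2 = 4*β*t := Real.sq_sqrt h4βt.le
  have hlin : HasDerivAt (fun τ : ℝ => 4*β*τ) (4*β) t := by
    simpa using (hasDerivAt_id t).const_mul (4*β)
  have hsqrt : HasDerivAt (fun τ : ℝ => Real.sqrt (4*β*τ))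
      ((4*β) / (2 * Real.sqrt (4*β*t))) t := hlin.sqrt h4βt.ne'
  have hnum : HasDerivAt (fun τ : ℝ => y + c*τ) c t := by
    simpa using ((hasDerivAt_id t).const_mul c).const_add y
  have h := hnum.div hsqrt hs.ne'
  refine h.congr_deriv (Eq.symm ?_)
  set s := Real.sqrt (4*β*t)
  field_simp
  linear_combination (-(c*t) - y) * hs2

lemma bracket_core (b x E1 E2 E' : ℝ) (hb : 0 < b) (hx : 0 ≤ x)
    (hE1 : 0 < E1) (hE2 : 0 < E2) (hE' : 0 < E')
    (hle : E2 ≤ E1) (hE1E' : E1 ≤ E')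
    (hdiff2 : E1 - E2 ≤ E1 * (4*b*x))
    (hsplit : 2*b < x → E1 * x^2 ≤ 8*E') :
    |(b+x)*E1 + (b-x)*E2| ≤ 34*b*E' := by
  have hval : (b+x)*E1 + (b-x)*E2 = b*(E1+E2) + x*(E1-E2) := by ring
  have hnn : 0 ≤ b*(E1+E2) + x*(E1-E2) := by nlinarith
  rw [hval, abs_of_nonneg hnn]
  have h1 : b*(E1+E2) ≤ 2*b*E' := by nlinarith
  have h2 : x*(E1-E2) ≤ 32*b*E' := by
    rcases le_or_gt x (2*b) with hcase | hcase
    · nlinarith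
    · have := hsplit hcase
      nlinarith
  linarith

lemma bracket_bound (b x : ℝ) (hb : 0 < b) (hx : 0 ≤ x) :
    |(b+x) * Real.exp (-(b-x)^2) + (b-x) * Real.exp (-(b+x)^2)|
      ≤ 34 * b * Real.exp (-(b-x)^2 / 2) := by
  refine bracket_core b x _ _ _ hb hx (Real.exp_pos _) (Real.exp_pos _) (Real.exp_pos _)
    (Real.exp_le_exp.2 (by nlinarith)) (Real.exp_le_exp.2 (by nlinarith [sq_nonneg (b-x)]))
    ?_ ?_
  · have hE2eq : Real.exp (-(b+x)^2) = Real.exp (-(b-x)^2) * Real.exp (-(4*b*x)) := by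
      rw [← Real.exp_add]; congr 1; ring
    rw [hE2eq]
    have h := Real.add_one_le_exp (-(4*b*x))
    nlinarith [Real.exp_pos (-(b-x)^2)]
  · intro hcase
    have hx0 : 0 < x := lt_trans (by positivity) hcase
    have hsq : x^2/8 ≤ (b-x)^2/2 := by nlinarith
    have hE1split : Real.exp (-(b-x)^2) = Real.exp (-(b-x)^2/2) * Real.exp (-((b-x)^2/2)) := by
      rw [← Real.exp_add]; congr 1; ring
    have hEx : Real.exp (-((b-x)^2/2)) * x^2 ≤ 8 := by
      have h8 : x^2/8 + 1 ≤ Real.exp (x^2/8) := Real.add_one_le_exp _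
      have hmono : Real.exp (-((b-x)^2/2)) ≤ Real.exp (-(x^2/8)) :=
        Real.exp_le_exp.2 (by linarith)
      have hinv : Real.exp (-(x^2/8)) * Real.exp (x^2/8) = 1 := by
        rw [← Real.exp_add]; simp
      nlinarith [Real.exp_pos (-(x^2/8)), Real.exp_pos (-((b-x)^2/2))]
    calc Real.exp (-(b-x)^2) * x^2
        = Real.exp (-(b-x)^2/2) * (Real.exp (-((b-x)^2/2)) * x^2) := by
          rw [hE1split]; ring
      _ ≤ Real.exp (-(b-x)^2/2) * 8 := by
          exact mul_le_mul_of_nonneg_left hEx (Real.exp_pos _).le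
      _ = 8 * Real.exp (-(b-x)^2/2) := by ring

theorem errfn_pair_time_derivative (a β : ℝ) (ha : 0 < a) (hβ : 0 < β) :
    ∃ C > 0, ∃ M > 0, ∀ y : ℝ, y ≤ 0 → ∀ t : ℝ, 0 < t →
      |deriv (fun τ : ℝ =>
          errfn ((y + a*τ) / Real.sqrt (4*β*τ)) -
          errfn ((y - a*τ) / Real.sqrt (4*β*τ))) t| ≤
        C * t ^ (-(1/2:ℝ)) * Real.exp (-(y + a*t)^2 / (M*t)) := by
  have hπ := Real.pi_pos
  refine ⟨34*a/(8*Real.pi*Real.sqrt β), by positivity, 8*β, by positivity, ?_⟩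
  intro y hy t ht
  have h4βt : (0:ℝ) < 4*β*t := by positivity
  have hs : 0 < Real.sqrt (4*β*t) := Real.sqrt_pos.2 h4βt
  set s := Real.sqrt (4*β*t) with hs_def
  have hs2 : s^2 = 4*β*t := Real.sq_sqrt h4βt.le
  set b := a*t/s with hb_def
  set x := -y/s with hx_def
  have hb : 0 < b := by positivity
  have hx : 0 ≤ x := div_nonneg (by linarith) hs.le
  have hg1 : HasDerivAt (fun τ : ℝ => (y + a*τ) / Real.sqrt (4*β*τ))
      ((a*t - y) / (2 * t * s)) t := g_hasDerivAt a y β t hβ ht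
  have hg2 : HasDerivAt (fun τ : ℝ => (y - a*τ) / Real.sqrt (4*β*τ))
      ((-(a*t) - y) / (2 * t * s)) t := by
    have := g_hasDerivAt (-a) y β t hβ ht
    simpa [neg_mul, ← sub_eq_add_neg] using this
  have h1 : HasDerivAt (fun τ : ℝ => errfn ((y + a*τ) / Real.sqrt (4*β*τ)))
      ((1 / (2 * Real.pi)) * Real.exp (-((y + a*t)/s)^2) * ((a*t - y) / (2 * t * s))) t := by
    have := (errfn_hasDerivAt ((y + a*t)/s)).comp t hg1
    exact this
  have h2 : HasDerivAt (fun τ : ℝ => errfn ((y - a*τ) / Real.sqrt (4*β*τ)))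
      ((1 / (2 * Real.pi)) * Real.exp (-((y - a*t)/s)^2) * ((-(a*t) - y) / (2 * t * s))) t := by
    have := (errfn_hasDerivAt ((y - a*t)/s)).comp t hg2
    exact this
  have hD := (h1.sub h2).deriv
  change |deriv ((fun τ : ℝ => errfn ((y + a*τ) / Real.sqrt (4*β*τ))) - fun τ : ℝ => errfn ((y - a*τ) / Real.sqrt (4*β*τ))) t| ≤ _
  rw [hD]
  have harg1 : (y + a*t)/s = b - x := by rw [hb_def, hx_def]; ring
  have harg2 : (y - a*t)/s = -(b+x) := by rw [hb_def, hx_def]; ring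
  set E1 := Real.exp (-(b-x)^2) with hE1_def
  set E2 := Real.exp (-(b+x)^2) with hE2_def
  have he1 : Real.exp (-((y + a*t)/s)^2) = E1 := by rw [harg1]
  have he2 : Real.exp (-((y - a*t)/s)^2) = E2 := by rw [harg2, neg_sq]
  rw [he1, he2]
  have hDval : (1 / (2 * Real.pi)) * E1 * ((a*t - y) / (2 * t * s)) -
      (1 / (2 * Real.pi)) * E2 * ((-(a*t) - y) / (2 * t * s)) =
      (1/(4*Real.pi*t)) * ((b+x)*E1 + (b-x)*E2) := by
    rw [hb_def, hx_def]
    field_simp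
    ring
  rw [hDval, abs_mul, abs_of_pos (show (0:ℝ) < 1/(4*Real.pi*t) by positivity)]
  have hbr := bracket_bound b x hb hx
  have hexp_eq : -(b-x)^2/2 = -(y + a*t)^2 / (8*β*t) := by
    have h' : (b-x)^2 = (y+a*t)^2/(4*β*t) := by rw [← harg1, div_pow, hs2]
    rw [h']; ring
  have hs_eq : s = 2*Real.sqrt β * Real.sqrt t := by
    rw [hs_def, show 4*β*t = (2*Real.sqrt β*Real.sqrt t)^2 by
      rw [mul_pow, mul_pow, Real.sq_sqrt hβ.le, Real.sq_sqrt ht.le]; ring,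
      Real.sqrt_sq (by positivity)]
  have hrpow : t ^ (-(1/2:ℝ)) = (Real.sqrt t)⁻¹ := by
    rw [Real.rpow_neg ht.le, ← Real.sqrt_eq_rpow]
  have hsqt : 0 < Real.sqrt t := Real.sqrt_pos.2 ht
  have hsqβ : 0 < Real.sqrt β := Real.sqrt_pos.2 hβ
  calc 1/(4*Real.pi*t) * |(b+x)*E1 + (b-x)*E2|
      ≤ 1/(4*Real.pi*t) * (34 * b * Real.exp (-(b-x)^2/2)) := by
        exact mul_le_mul_of_nonneg_left hbr (by positivity)
    _ = 34*a/(8*Real.pi*Real.sqrt β) * t ^ (-(1/2:ℝ)) *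
        Real.exp (-(y + a*t)^2 / (8*β*t)) := by
        rw [hexp_eq, hrpow, hb_def, hs_eq]
        field_simp
        ring
end
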